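/- arXiv:0807.0744 — 5 statements merged into one kernel-verified Lean document; each statement's English description precedes it below -/
import Mathlib

section
/- Let Q = ℝ^d and let R₁ : ℝ^d × ℝ^d → [0,∞) be continuous with R₁(q,·) a norm on ℝ^d for every q, let d be the induced Finsler distance, assumed complete, let T > 0, let E ∈ C¹([0,T] × ℝ^d; ℝ), and let R̂(q,v) := R₁(q,v) if R₁(q,v) ≤ 1 and R̂(q,v) := +∞ otherwise. Then an absolutely continuous curve (t̂,q̂) : [0,S] → [0,T] × ℝ^d satisfies, for some m ∈ L¹(0,S) with m(s) > 0 for a.e. s, the system { 0 ∈ ∂_v R̂(q̂(s), q̂'(s)/m(s)) + D_qE(t̂(s),q̂(s)) and t̂'(s) + R₁(q̂(s),q̂'(s)) = m(s) } for a.e. s ∈ (0,S), if and only if there exists a function λ : (0,S) → (0,∞) such that for a.e. s ∈ (0,S): 0 ∈ λ(s) ∂_v R₁(q̂(s),q̂'(s)) + D_qE(t̂(s),q̂(s)), t̂'(s) ≥ 0, λ(s) ≥ 1, (λ(s)−1) t̂'(s) = 0, and t̂'(s) + R₁(q̂(s),q̂'(s)) > 0. Here ∂_v denotes the convex subdifferential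 with respect to the second (velocity) variable. -/
open MeasureTheory Filter Set Function
open scoped Topology ENNReal RealInnerProductSpace

noncomputable section

/-- `y` is absolutely continuous on `[a,b]` with (a.e.) derivative `y'`:
it is the integral of the integrable function `y'`. -/
structure IsACOn {W : Type*} [NormedAddCommGroup W] [NormedSpace ℝ W]
    (a b : ℝ) (y : ℝ → W) (y' : ℝ → W) : Prop where
  intg : IntervalIntegrable y' volume a b
  eq : ∀ t ∈ Set.Icc a b, y t = y a + ∫ s in a..t, y' s

/-- A continuous Finsler dissipation: `R1 q ·` is a norm for every `q`. -/
structure IsFinsler {V : Type*} [NormedAddCommGroup V] [NormedSpace ℝ V]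
    (R1 : V → V → ℝ) : Prop where
  cont : Continuous fun p : V × V => R1 p.1 p.2
  nonneg : ∀ q v, 0 ≤ R1 q v
  eq_zero_iff : ∀ q v, R1 q v = 0 ↔ v = 0
  smul : ∀ (q : V) (c : ℝ) (v : V), R1 q (c • v) = |c| * R1 q v
  triangle : ∀ q u v, R1 q (u + v) ≤ R1 q u + R1 q v

/-- The Finsler distance induced by the dissipation `R1`. -/
def finslerDist {V : Type*} [NormedAddCommGroup V] [NormedSpace ℝ V]
    (R1 : V → V → ℝ) (q0 q1 : V) : ℝ :=
  sInf {L | ∃ y y' : ℝ → V, IsACOn 0 1 y y' ∧ y 0 = q0 ∧ y 1 = q1 ∧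
    L = ∫ s in (0:ℝ)..1, R1 (y s) (y' s)}

/-- Completeness of the space w.r.t. a distance function `dF`. -/
def IsCompleteD {V : Type*} (dF : V → V → ℝ) : Prop :=
  ∀ u : ℕ → V, (∀ ε > 0, ∃ N, ∀ m ≥ N, ∀ n ≥ N, dF (u m) (u n) < ε) →
    ∃ x : V, Filter.Tendsto (fun k => dF (u k) x) Filter.atTop (𝓝 0)

/-- `E` is a `C¹` energy with partial time derivative `Et` and spatial gradient `DqE`. -/
structure IsC1Energy {V : Type*} [NormedAddCommGroup V] [InnerProductSpace ℝ V]
    [CompleteSpace V] (E Et : ℝ → V → ℝ) (DqE : ℝ → V → V) : Prop where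
  contE : Continuous fun p : ℝ × V => E p.1 p.2
  contEt : Continuous fun p : ℝ × V => Et p.1 p.2
  contDqE : Continuous fun p : ℝ × V => DqE p.1 p.2
  hasDerivT : ∀ t q, HasDerivAt (fun τ => E τ q) (Et t q) t
  hasGrad : ∀ t q, HasGradientAt (fun x => E t x) (DqE t q) q

/-- The local slope `|∂E|(t,q) = sup_{v ≠ 0} ⟨D_qE(t,q), v⟩ / R₁(q,v)`. -/
def localSlope {V : Type*} [NormedAddCommGroup V] [InnerProductSpace ℝ V]
    (R1 : V → V → ℝ) (DqE : ℝ → V → V) (t : ℝ) (q : V) : ℝ :=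
  sSup {r | ∃ v : V, v ≠ 0 ∧ r = (inner ℝ (DqE t q) v : ℝ) / R1 q v}

/-- The limit function `M₀` (with values in `EReal`). -/
def M0 (a v x : ℝ) : EReal :=
  if a = 0 then ((v + v * max (x - 1) 0 : ℝ) : EReal)
  else if x ≤ 1 then ((v : ℝ) : EReal) else ⊤

/-- The limit function `M₀` (with values in `ℝ≥0∞`). -/
def M0E (a v x : ℝ) : ℝ≥0∞ :=
  if a = 0 then ENNReal.ofReal (v + v * max (x - 1) 0)
  else if x ≤ 1 then ENNReal.ofReal v else ⊤

/-- The viscous functional `M_ε` (with values in `ℝ≥0∞`). -/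
def MepsE (ε a v x : ℝ) : ℝ≥0∞ :=
  if a = 0 then (if v = 0 then 0 else ⊤)
  else ENNReal.ofReal (v + ε / (2 * a) * v ^ 2 + a / (2 * ε) * (max (x - 1) 0) ^ 2)

/-- Convex subdifferential of a real-valued function. -/
def subdiff {V : Type*} [NormedAddCommGroup V] [InnerProductSpace ℝ V]
    (f : V → ℝ) (v : V) : Set V :=
  {w | ∀ u, f v + (inner ℝ w (u - v) : ℝ) ≤ f u}

/-- Convex subdifferential of an extended-real-valued function. -/
def subdiffE {V : Type*} [NormedAddCommGroup V] [InnerProductSpace ℝ V]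
    (f : V → EReal) (v : V) : Set V :=
  {w | ∀ u, f v + (((inner ℝ w (u - v) : ℝ) : ℝ) : EReal) ≤ f u}

/-- `R̂(q,v) = R₁(q,v)` if `R₁(q,v) ≤ 1`, `+∞` otherwise. -/
def Rhat {V : Type*} (R1 : V → V → ℝ) (q v : V) : EReal :=
  if R1 q v ≤ 1 then ((R1 q v : ℝ) : EReal) else ⊤

/-- A parametrized metric solution of the rate-independent system `(ℝ^d, d, E)`. -/
structure IsParamSol {V : Type*} [NormedAddCommGroup V] [InnerProductSpace ℝ V]
    [CompleteSpace V]
    (R1 : V → V → ℝ) (E Et : ℝ → V → ℝ) (DqE : ℝ → V → V) (T s₀ s₁ : ℝ)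
    (th th' : ℝ → ℝ) (qh qh' : ℝ → V) : Prop where
  acT : IsACOn s₀ s₁ th th'
  acQ : IsACOn s₀ s₁ qh qh'
  maps : ∀ s ∈ Set.Icc s₀ s₁, th s ∈ Set.Icc 0 T
  mono : MonotoneOn th (Set.Icc s₀ s₁)
  nondeg : ∀ᵐ s ∂volume, s ∈ Set.Ioo s₀ s₁ → 0 < th' s + R1 (qh s) (qh' s)
  evi : ∀ᵐ s ∂volume, s ∈ Set.Ioo s₀ s₁ →
    ((deriv (fun r => E (th r) (qh r)) s - Et (th s) (qh s) * th' s : ℝ) : EReal)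
      ≤ -(M0 (th' s) (R1 (qh s) (qh' s)) (localSlope R1 DqE (th s) (qh s)))

/-- A solution of the viscous `ψ_ε`-gradient system. -/
structure IsViscousSol {V : Type*} [NormedAddCommGroup V] [InnerProductSpace ℝ V]
    [CompleteSpace V]
    (R1 : V → V → ℝ) (E Et : ℝ → V → ℝ) (DqE : ℝ → V → V) (T ε : ℝ)
    (q q' : ℝ → V) : Prop where
  ac : IsACOn 0 T q q'
  evi : ∀ᵐ t ∂volume, t ∈ Set.Ioo 0 T →
    deriv (fun τ => E τ (q τ)) t ≤ Et t (q t)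
      - (R1 (q t) (q' t) + ε / 2 * (R1 (q t) (q' t)) ^ 2)
      - (max (localSlope R1 DqE t (q t) - 1) 0) ^ 2 / (2 * ε)

/-- Total variation of `q` on the set `I`, w.r.t. the distance function `dF`. -/
def varWith {Y : Type*} (dF : Y → Y → ℝ) (q : ℝ → Y) (I : Set ℝ) : ℝ≥0∞ :=
  ⨆ p : ℕ × {u : ℕ → ℝ // Monotone u ∧ ∀ i, u i ∈ I},
    ∑ i ∈ Finset.range p.1, ENNReal.ofReal (dF (q (p.2.1 i)) (q (p.2.1 (i + 1))))

/-- Left limit of a curve at `t`, with the convention `q(0⁻) = q(0)`. -/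
def llim {Y : Type*} [TopologicalSpace Y] (q : ℝ → Y) (t : ℝ) : Y :=
  if t ≤ 0 then q t else Function.leftLim q t

/-- Right limit of a curve at `t`, with the convention `q(T⁺) = q(T)`. -/
def rlim {Y : Type*} [TopologicalSpace Y] (T : ℝ) (q : ℝ → Y) (t : ℝ) : Y :=
  if T ≤ t then q t else Function.rightLim q t

/-- Continuity set of a curve `q : [0,T] → Y`. -/
def contSet {Y : Type*} [TopologicalSpace Y] (T : ℝ) (q : ℝ → Y) : Set ℝ :=
  {t | t ∈ Set.Icc 0 T ∧ llim q t = q t ∧ rlim T q t = q t}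

/-- Jump set of a curve `q : [0,T] → Y`. -/
def jumpSet {Y : Type*} [TopologicalSpace Y] (T : ℝ) (q : ℝ → Y) : Set ℝ :=
  Set.Icc 0 T \ contSet T q

/-- The (clamped) variation function `t ↦ Var(q, [0, min(t,T)])`, real-valued. -/
def vFun {Y : Type*} (dF : Y → Y → ℝ) (T : ℝ) (q : ℝ → Y) (t : ℝ) : ℝ :=
  (varWith dF q (Set.Icc 0 (min t T))).toReal

/-- `μ` is the Lebesgue–Stieltjes measure (distributional derivative) of the
variation function of `q` w.r.t. the distance `dF`. -/
def IsVarMeasure {Y : Type*} (dF : Y → Y → ℝ) (T : ℝ) (q : ℝ → Y)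
    (μ : Measure ℝ) : Prop :=
  ∀ a b : ℝ, a ≤ b → μ (Set.Ioc a b) =
    ENNReal.ofReal (Function.rightLim (vFun dF T q) b - Function.rightLim (vFun dF T q) a)

/-- Metric derivative of a curve in a (pseudo-)metric space. -/
def mderiv {Y : Type*} [PseudoMetricSpace Y] (y : ℝ → Y) (s : ℝ) : ℝ :=
  Filter.limsup (fun h : ℝ => dist (y (s + h)) (y s) / |h|) (𝓝[≠] (0 : ℝ))

/-- The slope distance `S_α(t; q₀, q₁)`. -/
def slopeDist {V : Type*} [NormedAddCommGroup V] [InnerProductSpace ℝ V]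
    (R1 : V → V → ℝ) (DqE : ℝ → V → V) (α t : ℝ) (q0 q1 : V) : ℝ :=
  sInf {r | ∃ y y' : ℝ → V, IsACOn 0 1 y y' ∧ y 0 = q0 ∧ y 1 = q1 ∧
    r = ∫ s in (0:ℝ)..1, max (localSlope R1 DqE t (y s)) α * R1 (y s) (y' s)}

/-- The dissipation functional `Σ₀(q, [t₀,t₁])`. -/
def Sigma0 {V : Type*} [NormedAddCommGroup V] [InnerProductSpace ℝ V]
    (R1 : V → V → ℝ) (DqE : ℝ → V → V) (T : ℝ) (q : ℝ → V) (μ : Measure ℝ)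
    (t₀ t₁ : ℝ) : ℝ≥0∞ :=
  (∫⁻ r in Set.Ioo t₀ t₁, ENNReal.ofReal (localSlope R1 DqE r (q r))
      ∂(μ.restrict (contSet T q)))
  + ENNReal.ofReal (slopeDist R1 DqE 0 t₀ (q t₀) (rlim T q t₀))
  + ENNReal.ofReal (slopeDist R1 DqE 0 t₁ (llim q t₁) (q t₁))
  + ∑' t : ↥(jumpSet T q ∩ Set.Ioo t₀ t₁),
      (ENNReal.ofReal (slopeDist R1 DqE 0 t (llim q t) (q t))
       + ENNReal.ofReal (slopeDist R1 DqE 0 t (q t) (rlim T q t)))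

/-- The functional `Γ(q,[t₀,t₁])`. -/
def GammaFn {V : Type*} [NormedAddCommGroup V] [InnerProductSpace ℝ V]
    (R1 : V → V → ℝ) (DqE : ℝ → V → V) (E : ℝ → V → ℝ) (T : ℝ) (q : ℝ → V)
    (μ : Measure ℝ) (t₀ t₁ : ℝ) : ℝ≥0∞ :=
  (∫⁻ r in Set.Ioo t₀ t₁, ENNReal.ofReal (localSlope R1 DqE r (q r))
      ∂(μ.restrict (contSet T q)))
  + ENNReal.ofReal (|E t₀ (q t₀) - E t₀ (rlim T q t₀)|)
  + ENNReal.ofReal (|E t₁ (llim q t₁) - E t₁ (q t₁)|)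
  + ∑' t : ↥(jumpSet T q ∩ Set.Ioo t₀ t₁),
      (ENNReal.ofReal (|E (↑t) (q t) - E (↑t) (rlim T q t)|)
       + ENNReal.ofReal (|E (↑t) (llim q t) - E (↑t) (q t)|))

/-- The dissipation functional `Σ₁(q, [t₀,t₁])`. -/
def Sigma1 {V : Type*} [NormedAddCommGroup V] [InnerProductSpace ℝ V]
    (R1 : V → V → ℝ) (DqE : ℝ → V → V) (T : ℝ) (q : ℝ → V) (μ : Measure ℝ)
    (t₀ t₁ : ℝ) : ℝ≥0∞ :=
  (∫⁻ r in Set.Ioo t₀ t₁, ENNReal.ofReal (max (localSlope R1 DqE r (q r)) 1)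
      ∂(μ.restrict (contSet T q)))
  + (∫⁻ r in Set.Ioo t₀ t₁, ENNReal.ofReal (localSlope R1 DqE r (q r) - 1))
  + ENNReal.ofReal (slopeDist R1 DqE 1 t₀ (q t₀) (rlim T q t₀))
  + ENNReal.ofReal (slopeDist R1 DqE 1 t₁ (llim q t₁) (q t₁))
  + ∑' t : ↥(jumpSet T q ∩ Set.Ioo t₀ t₁),
      (ENNReal.ofReal (slopeDist R1 DqE 1 t (llim q t) (q t))
       + ENNReal.ofReal (slopeDist R1 DqE 1 t (q t) (rlim T q t)))

/-- A BV solution of the rate-independent system `(ℝ^d, d, E)`, where `μ` is the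
variation measure of `q`. -/
structure IsBVSol {V : Type*} [NormedAddCommGroup V] [InnerProductSpace ℝ V]
    (R1 : V → V → ℝ) (E Et : ℝ → V → ℝ) (DqE : ℝ → V → V) (T : ℝ) (q : ℝ → V)
    (μ : Measure ℝ) : Prop where
  en : ∀ t₀ t₁ : ℝ, 0 ≤ t₀ → t₀ < t₁ → t₁ ≤ T →
    ((E t₁ (q t₁) - E t₀ (q t₀) - ∫ t in t₀..t₁, Et t (q t) : ℝ) : EReal)
      ≤ -((Sigma0 R1 DqE T q μ t₀ t₁ : ℝ≥0∞) : EReal)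
  locstab : ∀ t ∈ Set.Icc 0 T \ jumpSet T q, localSlope R1 DqE t (q t) ≤ 1
  suppstab : ∀ t : ℝ, (∀ ε > 0, μ (Set.Ioo (t - ε) (t + ε)) ≠ 0) →
    1 ≤ localSlope R1 DqE t (q t)
  jump : ∀ t ∈ jumpSet T q, ∃ (y y' : ℝ → V) (θt : ℝ),
    IsACOn 0 1 y y' ∧ y 0 = llim q t ∧ y 1 = rlim T q t ∧ θt ∈ Set.Icc (0:ℝ) 1 ∧
    y θt = q t ∧ (∀ θ ∈ Set.Icc (0:ℝ) 1, 1 ≤ localSlope R1 DqE t (y θ)) ∧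
    E t (rlim T q t) - E t (llim q t)
      = -∫ θ in (0:ℝ)..1, localSlope R1 DqE t (y θ) * R1 (y θ) (y' θ)

/-- An energetic solution of the rate-independent system `(ℝ^d, d, E)`. -/
def IsEnergeticSol {V : Type*} [NormedAddCommGroup V] [InnerProductSpace ℝ V]
    (R1 : V → V → ℝ) (E Et : ℝ → V → ℝ) (T : ℝ) (q : ℝ → V) : Prop :=
  ∀ t ∈ Set.Icc (0:ℝ) T,
    (∀ p, E t (q t) ≤ E t p + finslerDist R1 (q t) p) ∧
    E t (q t) + (varWith (finslerDist R1) q (Set.Icc 0 t)).toReal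
      = E 0 (q 0) + ∫ s in (0:ℝ)..t, Et s (q s)

/-- The global slope of `E(t,·)` at `q`, w.r.t. the distance `dF`. -/
def gSlopeD {V : Type*} (dF : V → V → ℝ) (E : ℝ → V → ℝ) (t : ℝ) (q : V) : ℝ≥0∞ :=
  ⨆ (v : V) (_ : v ≠ q), ENNReal.ofReal (max (E t q - E t v) 0 / dF q v)

end

variable {d : ℕ}

section ptwise
variable {V : Type*} [NormedAddCommGroup V] [InnerProductSpace ℝ V]

lemma key_of_mem {R1 : V → V → ℝ} {q v ξ : V} (hv : R1 q v ≤ 1)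
    (hmem : ξ ∈ subdiffE (fun w => Rhat R1 q w) v) :
    ∀ u, R1 q u ≤ 1 → R1 q v + (inner ℝ ξ (u - v) : ℝ) ≤ R1 q u := by
  intro u hu
  have h := hmem u
  simp only [Rhat, if_pos hv, if_pos hu] at h
  rw [← EReal.coe_add] at h
  exact_mod_cast h

lemma rv_le_one {R1 : V → V → ℝ} (hF : IsFinsler R1) {q v ξ : V}
    (hmem : ξ ∈ subdiffE (fun w => Rhat R1 q w) v) : R1 q v ≤ 1 := by
  by_contra hv
  have h := hmem 0
  have h0 : R1 q 0 = 0 := (hF.eq_zero_iff q 0).mpr rfl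
  simp only [Rhat, if_neg hv, if_pos (by rw [h0]; norm_num : R1 q 0 ≤ 1), h0,
    EReal.top_add_coe] at h
  simp at h

lemma fwd_pt {R1 : V → V → ℝ} (hF : IsFinsler R1) (q q' g : V) (m t' : ℝ)
    (hm : 0 < m) (hsum : t' + R1 q q' = m)
    (hmem : -g ∈ subdiffE (fun v => Rhat R1 q v) (m⁻¹ • q')) :
    (∃ w ∈ subdiff (fun v => R1 q v) q',
        (max (inner ℝ (-g) (m⁻¹ • q') : ℝ) 1) • w + g = 0) ∧
      0 ≤ t' ∧ 1 ≤ max (inner ℝ (-g) (m⁻¹ • q') : ℝ) 1 ∧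
      (max (inner ℝ (-g) (m⁻¹ • q') : ℝ) 1 - 1) * t' = 0 ∧ 0 < t' + R1 q q' := by
  set ξ : V := -g with hξ
  set v : V := m⁻¹ • q' with hv
  set lam : ℝ := max (inner ℝ ξ v : ℝ) 1 with hlam
  have h0 : R1 q 0 = 0 := (hF.eq_zero_iff q 0).mpr rfl
  have hRv : R1 q v ≤ 1 := rv_le_one hF hmem
  have key := key_of_mem hRv hmem
  have hRveq : R1 q v = m⁻¹ * R1 q q' := by
    rw [hv, hF.smul, abs_of_pos (inv_pos.mpr hm)]
  have hq'le : R1 q q' ≤ m := by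
    have h2 := mul_le_mul_of_nonneg_left hRv hm.le
    rw [hRveq, ← mul_assoc, mul_inv_cancel₀ hm.ne', one_mul, mul_one] at h2
    exact h2
  have ht' : 0 ≤ t' := by linarith
  have hq'v : q' = m • v := by rw [hv, smul_smul, mul_inv_cancel₀ hm.ne', one_smul]
  have hlam1 : 1 ≤ lam := le_max_right _ _
  have hlampos : 0 < lam := lt_of_lt_of_le one_pos hlam1
  have Bgen : R1 q v ≤ (inner ℝ ξ v : ℝ) := by
    have hk := key 0 (by rw [h0]; norm_num)
    rw [zero_sub, inner_neg_right, h0] at hk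
    linarith
  -- main inequalities
  have main : (∀ u, (inner ℝ ξ u : ℝ) ≤ lam * R1 q u) ∧
      lam * R1 q v ≤ (inner ℝ ξ v : ℝ) ∧ (lam - 1) * t' = 0 := by
    rcases lt_or_eq_of_le hRv with hlt | heq
    · -- R1 q v < 1
      have A1 : ∀ u, (inner ℝ ξ u : ℝ) ≤ R1 q u := by
        intro u
        have hu0 : 0 ≤ R1 q u := hF.nonneg _ _
        set t : ℝ := (1 - R1 q v) / (R1 q u + 1) with hT
        have ht : 0 < t := div_pos (by linarith) (by linarith)
        have htu : R1 q (t • u) = t * R1 q u := by rw [hF.smul, abs_of_pos ht]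
        have h1 := hF.triangle q v (t • u)
        rw [htu] at h1
        have h2 : t * (R1 q u + 1) = 1 - R1 q v := by
          rw [hT]; field_simp
        have hle : R1 q (v + t • u) ≤ 1 := by nlinarith
        have hk := key (v + t • u) hle
        rw [add_sub_cancel_left, real_inner_smul_right] at hk
        nlinarith
      have hvlt : (inner ℝ ξ v : ℝ) < 1 := lt_of_le_of_lt (A1 v) hlt
      have hlam_eq : lam = 1 := max_eq_right hvlt.le
      refine ⟨fun u => ?_, ?_, ?_⟩
      · rw [hlam_eq, one_mul]; exact A1 u
      · rw [hlam_eq, one_mul]; exact Bgen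
      · rw [hlam_eq]; ring
    · -- R1 q v = 1
      have hge1 : 1 ≤ (inner ℝ ξ v : ℝ) := by linarith
      have hlam_eq : lam = (inner ℝ ξ v : ℝ) := max_eq_left hge1
      have ht'0 : t' = 0 := by
        have h2 : m * R1 q v = R1 q q' := by
          rw [hRveq, ← mul_assoc, mul_inv_cancel₀ hm.ne', one_mul]
        rw [heq, mul_one] at h2
        linarith
      refine ⟨fun u => ?_, ?_, ?_⟩
      · rcases eq_or_lt_of_le (hF.nonneg q u) with hu0 | hupos
        · have hu : u = 0 := (hF.eq_zero_iff q u).mp hu0.symm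
          simp [hu, h0]
        · set u' : V := (R1 q u)⁻¹ • u with hu'
          have hru' : R1 q u' = 1 := by
            rw [hu', hF.smul, abs_of_pos (inv_pos.mpr hupos), inv_mul_cancel₀ hupos.ne']
          have hk := key u' (le_of_eq hru')
          rw [inner_sub_right, hu', real_inner_smul_right, ← hu', hru'] at hk
          have h2 : (R1 q u)⁻¹ * (inner ℝ ξ u : ℝ) ≤ (inner ℝ ξ v : ℝ) := by
            linarith [heq]
          have h3 := mul_le_mul_of_nonneg_left h2 hupos.le
          have h4 : R1 q u * ((R1 q u)⁻¹ * (inner ℝ ξ u : ℝ)) = (inner ℝ ξ u : ℝ) := by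
            field_simp
          rw [h4] at h3
          rw [hlam_eq, mul_comm]
          exact h3
      · rw [hlam_eq, heq, mul_one]
      · rw [ht'0]; ring
  obtain ⟨hA, hB, hcompl⟩ := main
  refine ⟨⟨lam⁻¹ • ξ, ?_, ?_⟩, ht', hlam1, hcompl, by linarith⟩
  · intro u
    show R1 q q' + (inner ℝ (lam⁻¹ • ξ) (u - q') : ℝ) ≤ R1 q u
    rw [real_inner_smul_left, inner_sub_right]
    have hAu := hA u
    have hBq : lam * R1 q q' ≤ (inner ℝ ξ q' : ℝ) := by
      have h1 : R1 q q' = m * R1 q v := by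
        rw [hRveq, ← mul_assoc, mul_inv_cancel₀ hm.ne', one_mul]
      have h2 : (inner ℝ ξ q' : ℝ) = m * (inner ℝ ξ v : ℝ) := by
        rw [hq'v, real_inner_smul_right]
      rw [h1, h2]
      nlinarith [mul_le_mul_of_nonneg_left hB hm.le]
    have hinv : lam⁻¹ * lam = 1 := inv_mul_cancel₀ hlampos.ne'
    have h1 : lam⁻¹ * (inner ℝ ξ u : ℝ) ≤ R1 q u := by
      have h := mul_le_mul_of_nonneg_left hAu (inv_nonneg.mpr hlampos.le)
      rw [← mul_assoc, hinv, one_mul] at h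
      exact h
    have h2 : R1 q q' ≤ lam⁻¹ * (inner ℝ ξ q' : ℝ) := by
      have h := mul_le_mul_of_nonneg_left hBq (inv_nonneg.mpr hlampos.le)
      rw [← mul_assoc, hinv, one_mul] at h
      exact h
    linarith
  · rw [smul_smul, mul_inv_cancel₀ hlampos.ne', one_smul, hξ]
    exact neg_add_cancel g

lemma bwd_pt {R1 : V → V → ℝ} (hF : IsFinsler R1) (q q' g w : V) (lam t' : ℝ)
    (hw : w ∈ subdiff (fun v => R1 q v) q') (heqn : lam • w + g = 0)
    (ht' : 0 ≤ t') (hl : 1 ≤ lam) (hc : (lam - 1) * t' = 0)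
    (hpos : 0 < t' + R1 q q') :
    -g ∈ subdiffE (fun v => Rhat R1 q v) ((t' + R1 q q')⁻¹ • q') := by
  set m : ℝ := t' + R1 q q' with hmdef
  have h0 : R1 q 0 = 0 := (hF.eq_zero_iff q 0).mpr rfl
  have hg : -g = lam • w := neg_eq_of_add_eq_zero_left heqn
  have hwle : ∀ u, (inner ℝ w u : ℝ) ≤ R1 q u := by
    intro u
    have h1 := hw (q' + u)
    simp only [add_sub_cancel_left] at h1
    have h2 := hF.triangle q q' u
    linarith
  have hweq : (inner ℝ w q' : ℝ) = R1 q q' := by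
    have h1 := hw 0
    simp only [zero_sub, inner_neg_right, h0] at h1
    linarith [hwle q']
  set v : V := m⁻¹ • q' with hv
  have hRveq : R1 q v = m⁻¹ * R1 q q' := by
    rw [hv, hF.smul, abs_of_pos (inv_pos.mpr hpos)]
  have hRv : R1 q v ≤ 1 := by
    rw [hRveq]
    have h1 : R1 q q' ≤ m := by rw [hmdef]; linarith
    have h2 := mul_le_mul_of_nonneg_left h1 (inv_nonneg.mpr hpos.le)
    rw [inv_mul_cancel₀ hpos.ne'] at h2
    exact h2
  have hwv : (inner ℝ w v : ℝ) = R1 q v := by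
    rw [hv, real_inner_smul_right, hweq, hRveq]
  intro u
  show Rhat R1 q v + _ ≤ Rhat R1 q u
  simp only [Rhat]
  by_cases hu : R1 q u ≤ 1
  · rw [if_pos hRv, if_pos hu, ← EReal.coe_add, EReal.coe_le_coe_iff]
    rw [hg, real_inner_smul_left, inner_sub_right, hwv]
    rcases mul_eq_zero.mp hc with hl1 | ht0
    · have hl' : lam = 1 := by linarith
      rw [hl']
      have := hwle u
      linarith
    · have hmr : m = R1 q q' := by rw [hmdef, ht0, zero_add]
      have hRv1 : R1 q v = 1 := by
        rw [hRveq, ← hmr, inv_mul_cancel₀ hpos.ne']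
      rw [hRv1]
      have h1 := hwle u
      nlinarith
  · rw [if_neg hu, if_pos hRv]
    exact le_top

end ptwise

theorem statement0 (T S : ℝ) (hT : 0 < T) (hS : 0 < S)
    (R1 : EuclideanSpace ℝ (Fin d) → EuclideanSpace ℝ (Fin d) → ℝ)
    (hR : IsFinsler R1) (hcomp : IsCompleteD (finslerDist R1))
    (E Et : ℝ → EuclideanSpace ℝ (Fin d) → ℝ)
    (DqE : ℝ → EuclideanSpace ℝ (Fin d) → EuclideanSpace ℝ (Fin d))
    (hE : IsC1Energy E Et DqE)
    (th th' : ℝ → ℝ) (qh qh' : ℝ → EuclideanSpace ℝ (Fin d))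
    (hACt : IsACOn 0 S th th') (hACq : IsACOn 0 S qh qh')
    (hmap : ∀ s ∈ Set.Icc (0:ℝ) S, th s ∈ Set.Icc 0 T) :
    (∃ m : ℝ → ℝ, IntegrableOn m (Set.Ioo 0 S) ∧
        (∀ᵐ s ∂volume, s ∈ Set.Ioo 0 S → 0 < m s) ∧
        (∀ᵐ s ∂volume, s ∈ Set.Ioo 0 S →
          (-(DqE (th s) (qh s)) ∈ subdiffE (fun v => Rhat R1 (qh s) v) ((m s)⁻¹ • qh' s) ∧
           th' s + R1 (qh s) (qh' s) = m s)))
    ↔ (∃ lam : ℝ → ℝ, (∀ s ∈ Set.Ioo (0:ℝ) S, 0 < lam s) ∧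
        (∀ᵐ s ∂volume, s ∈ Set.Ioo 0 S →
          ((∃ w ∈ subdiff (fun v => R1 (qh s) v) (qh' s),
              lam s • w + DqE (th s) (qh s) = 0) ∧
           0 ≤ th' s ∧ 1 ≤ lam s ∧ (lam s - 1) * th' s = 0 ∧
           0 < th' s + R1 (qh s) (qh' s)))) := by
  constructor
  · rintro ⟨m, hint, hmpos, hae⟩
    refine ⟨fun s => max (inner ℝ (-(DqE (th s) (qh s))) ((m s)⁻¹ • qh' s) : ℝ) 1,
      fun s _ => lt_of_lt_of_le one_pos (le_max_right _ _), ?_⟩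
    filter_upwards [hmpos, hae] with s h1 h2 hs
    obtain ⟨hsub, hsum⟩ := h2 hs
    exact fwd_pt hR _ _ _ _ _ (h1 hs) hsum hsub
  · rintro ⟨lam, hlampos, hae⟩
    refine ⟨fun s => th' s + R1 (qh s) (qh' s), ?_, ?_, ?_⟩
    · have hSle : (0:ℝ) ≤ S := hS.le
      have hq'int : IntegrableOn qh' (Set.Ioo 0 S) volume :=
        ((intervalIntegrable_iff_integrableOn_Ioc_of_le hSle).mp hACq.intg).mono_set
          Set.Ioo_subset_Ioc_self
      have hth'int : IntegrableOn th' (Set.Ioo 0 S) volume :=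
        ((intervalIntegrable_iff_integrableOn_Ioc_of_le hSle).mp hACt.intg).mono_set
          Set.Ioo_subset_Ioc_self
      have hqcont : ContinuousOn qh (Set.Icc 0 S) := by
        have hprim := intervalIntegral.continuousOn_primitive_interval' hACq.intg
          (left_mem_uIcc (a := (0:ℝ)) (b := S))
        rw [Set.uIcc_of_le hSle] at hprim
        exact (continuousOn_const.add hprim).congr (fun t ht => hACq.eq t ht)
      have hKcomp : IsCompact (qh '' Set.Icc 0 S) :=
        isCompact_Icc.image_of_continuousOn hqcont
      have hKB : IsCompact ((qh '' Set.Icc 0 S) ×ˢ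
          Metric.closedBall (0 : EuclideanSpace ℝ (Fin d)) 1) :=
        hKcomp.prod (isCompact_closedBall _ _)
      obtain ⟨C, hC⟩ := hKB.exists_bound_of_continuousOn hR.cont.continuousOn
      have hbound : ∀ p ∈ Set.Icc (0:ℝ) S, ∀ v, R1 (qh p) v ≤ max C 0 * ‖v‖ := by
        intro p hp v
        by_cases hv : v = 0
        · simp [hv, (hR.eq_zero_iff (qh p) 0).mpr rfl]
        · have hnv : 0 < ‖v‖ := norm_pos_iff.mpr hv
          have hu : ‖v‖⁻¹ • v ∈ Metric.closedBall (0 : EuclideanSpace ℝ (Fin d)) 1 := by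
            simp [norm_smul, abs_of_pos (inv_pos.mpr hnv), inv_mul_cancel₀ hnv.ne']
          have hmem : ((qh p, ‖v‖⁻¹ • v) :
              EuclideanSpace ℝ (Fin d) × EuclideanSpace ℝ (Fin d)) ∈
              (qh '' Set.Icc 0 S) ×ˢ Metric.closedBall (0 : EuclideanSpace ℝ (Fin d)) 1 :=
            ⟨Set.mem_image_of_mem qh hp, hu⟩
          have h1 := hC _ hmem
          rw [Real.norm_eq_abs] at h1
          have h3 : R1 (qh p) (‖v‖⁻¹ • v) ≤ max C 0 :=
            le_trans (le_abs_self _) (le_trans h1 (le_max_left _ _))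
          have h2 : ‖v‖ * R1 (qh p) (‖v‖⁻¹ • v) = R1 (qh p) v := by
            rw [hR.smul, abs_of_pos (inv_pos.mpr hnv), ← mul_assoc,
              mul_inv_cancel₀ hnv.ne', one_mul]
          nlinarith [h3, hnv, h2]
      have hqm : AEStronglyMeasurable qh (volume.restrict (Set.Ioo 0 S)) :=
        (hqcont.mono Set.Ioo_subset_Icc_self).aestronglyMeasurable measurableSet_Ioo
      have hq'm := hq'int.aestronglyMeasurable
      have hRm : AEStronglyMeasurable (fun s => R1 (qh s) (qh' s))
          (volume.restrict (Set.Ioo 0 S)) :=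
        hR.cont.comp_aestronglyMeasurable (hqm.prodMk hq'm)
      have hRint : IntegrableOn (fun s => R1 (qh s) (qh' s)) (Set.Ioo 0 S) volume := by
        apply Integrable.mono' (hq'int.norm.const_mul (max C 0)) hRm
        filter_upwards [ae_restrict_mem measurableSet_Ioo] with s hs
        rw [Real.norm_eq_abs, abs_of_nonneg (hR.nonneg _ _)]
        exact hbound s (Set.Ioo_subset_Icc_self hs) _
      exact hth'int.add hRint
    · filter_upwards [hae] with s h hs
      exact (h hs).2.2.2.2
    · filter_upwards [hae] with s h hs
      obtain ⟨⟨w, hw, heqn⟩, ht'0, hl, hc, hpos⟩ := h hs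
      exact ⟨bwd_pt hR _ _ _ _ _ _ hw heqn ht'0 hl hc hpos, rfl⟩
end

section
/- Let Q = ℝ^d with a continuous Finsler dissipation R₁ (each R₁(q,·) a norm), induced complete Finsler distance d, and E ∈ C¹([0,T] × ℝ^d; ℝ). Then for every (t,q) ∈ [0,T] × ℝ^d the local slope equals the metric slope: sup { ⟨D_qE(t,q), v⟩ / R₁(q,v) : v ∈ ℝ^d, v ≠ 0 } = limsup_{q̃ → q} (E(t,q) − E(t,q̃))⁺ / d(q,q̃), where (·)⁺ denotes the positive part and the limsup is taken with respect to the distance d. -/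
open MeasureTheory Filter Set Function
open scoped Topology ENNReal RealInnerProductSpace

section Helpers
open intervalIntegral
variable {V : Type*} [NormedAddCommGroup V] [InnerProductSpace ℝ V] [FiniteDimensional ℝ V]
variable {R1 : V → V → ℝ} {y y' : ℝ → V}

lemma R1_zero (hR : IsFinsler R1) (x : V) : R1 x 0 = 0 :=
  (hR.eq_zero_iff x 0).2 rfl

lemma R1_neg (hR : IsFinsler R1) (x v : V) : R1 x (-v) = R1 x v := by
  have := hR.smul x (-1) v
  simpa using this

lemma R1_scale (hR : IsFinsler R1) (x : V) {v : V} (hv : v ≠ 0) :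
    R1 x v = ‖v‖ * R1 x (‖v‖⁻¹ • v) := by
  have h : v = ‖v‖ • (‖v‖⁻¹ • v) := by
    rw [smul_smul, mul_inv_cancel₀ (norm_ne_zero_iff.2 hv), one_smul]
  conv_lhs => rw [h]
  rw [hR.smul, abs_of_nonneg (norm_nonneg v)]

lemma finsler_bounds (hR : IsFinsler R1) {K : Set V} (hK : IsCompact K) :
    ∃ c C : ℝ, 0 < c ∧ 0 ≤ C ∧ ∀ x ∈ K, ∀ v, c * ‖v‖ ≤ R1 x v ∧ R1 x v ≤ C * ‖v‖ := by
  rcases (K ×ˢ Metric.sphere (0:V) 1).eq_empty_or_nonempty with hS | hS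
  · refine ⟨1, 1, one_pos, zero_le_one, fun x hx v => ?_⟩
    by_cases hv : v = 0
    · simp [hv, R1_zero hR]
    · exact absurd (Set.mk_mem_prod hx (by simp [norm_smul, norm_inv,
        inv_mul_cancel₀ (norm_ne_zero_iff.2 hv)] : (‖v‖⁻¹ • v) ∈ Metric.sphere (0:V) 1))
        (by rw [hS]; exact Set.notMem_empty _)
  · have hKc : IsCompact (K ×ˢ Metric.sphere (0:V) 1) :=
      hK.prod (isCompact_sphere 0 1)
    obtain ⟨⟨x₀, u₀⟩, hmem, hmin'⟩ := hKc.exists_isMinOn hS (hR.cont.continuousOn)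
    obtain ⟨⟨x₁, u₁⟩, hmem1, hmax'⟩ := hKc.exists_isMaxOn hS (hR.cont.continuousOn)
    have hmin : ∀ p ∈ K ×ˢ Metric.sphere (0:V) 1, R1 x₀ u₀ ≤ R1 p.1 p.2 := fun p hp => hmin' hp
    have hmax : ∀ p ∈ K ×ˢ Metric.sphere (0:V) 1, R1 p.1 p.2 ≤ R1 x₁ u₁ := fun p hp => hmax' hp
    have hu₀ : u₀ ≠ 0 := by
      have := hmem.2; simp only [Metric.mem_sphere, dist_zero_right] at this
      intro h; rw [h] at this; simp at this
    have hc : 0 < R1 x₀ u₀ :=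
      lt_of_le_of_ne (hR.nonneg _ _) (fun h => hu₀ ((hR.eq_zero_iff _ _).1 h.symm))
    refine ⟨R1 x₀ u₀, R1 x₁ u₁, hc, le_trans hc.le (hmin _ hmem1), fun x hx v => ?_⟩
    by_cases hv : v = 0
    · simp [hv, R1_zero hR]
    · have husph : (‖v‖⁻¹ • v) ∈ Metric.sphere (0:V) 1 := by
        simp [norm_smul, norm_inv, inv_mul_cancel₀ (norm_ne_zero_iff.2 hv)]
      have h1 := hmin (x, ‖v‖⁻¹ • v) (Set.mk_mem_prod hx husph)
      have h2 := hmax (x, ‖v‖⁻¹ • v) (Set.mk_mem_prod hx husph)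
      rw [R1_scale hR x hv]
      constructor
      · rw [mul_comm]
        exact mul_le_mul_of_nonneg_left h1 (norm_nonneg v)
      · rw [mul_comm (R1 x₁ u₁)]
        exact mul_le_mul_of_nonneg_left h2 (norm_nonneg v)

lemma acOn_continuousOn (h : IsACOn 0 1 y y') : ContinuousOn y (Set.Icc 0 1) := by
  have hint : MeasureTheory.IntegrableOn y' (Set.Icc (0:ℝ) 1) :=
    (integrableOn_Icc_iff_integrableOn_Ioc).2
      ((intervalIntegrable_iff_integrableOn_Ioc_of_le zero_le_one).1 h.intg)
  have hc : ContinuousOn (fun x => y 0 + ∫ s in Set.Ioc (0:ℝ) x, y' s) (Set.Icc 0 1) :=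
    (continuousOn_const.add (intervalIntegral.continuousOn_primitive hint))
  refine ContinuousOn.congr hc (fun x hx => ?_)
  rw [h.eq x hx, intervalIntegral.integral_of_le hx.1]

lemma acOn_sub_integral (h : IsACOn 0 1 y y') {τ : ℝ} (hτ : τ ∈ Set.Icc (0:ℝ) 1) :
    ∫ s in (0:ℝ)..τ, y' s = y τ - y 0 := by
  rw [h.eq τ hτ]; abel

lemma integrand_integrable (hR : IsFinsler R1) (h : IsACOn 0 1 y y') :
    IntervalIntegrable (fun s => R1 (y s) (y' s)) MeasureTheory.volume 0 1 := by
  have hy'm : MeasureTheory.AEStronglyMeasurable y'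
      (MeasureTheory.volume.restrict (Set.Ioc (0:ℝ) 1)) :=
    ((intervalIntegrable_iff_integrableOn_Ioc_of_le zero_le_one).1 h.intg).aestronglyMeasurable
  have hym : MeasureTheory.AEStronglyMeasurable y
      (MeasureTheory.volume.restrict (Set.Ioc (0:ℝ) 1)) :=
    ((acOn_continuousOn h).mono Set.Ioc_subset_Icc_self).aestronglyMeasurable measurableSet_Ioc
  have hm : MeasureTheory.AEStronglyMeasurable (fun s => R1 (y s) (y' s))
      (MeasureTheory.volume.restrict (Set.Ioc (0:ℝ) 1)) :=
    hR.cont.comp_aestronglyMeasurable (hym.prodMk hy'm)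
  have hKc : IsCompact (y '' Set.Icc (0:ℝ) 1) :=
    (isCompact_Icc).image_of_continuousOn (acOn_continuousOn h)
  obtain ⟨c, C, hc, hC, hb⟩ := finsler_bounds hR hKc
  rw [intervalIntegrable_iff_integrableOn_Ioc_of_le zero_le_one]
  refine MeasureTheory.Integrable.mono'
    (((intervalIntegrable_iff_integrableOn_Ioc_of_le zero_le_one).1 h.intg).norm.const_mul C)
    hm ?_
  filter_upwards [MeasureTheory.ae_restrict_mem measurableSet_Ioc] with s hs
  rw [Real.norm_of_nonneg (hR.nonneg _ _)]
  exact (hb (y s) (Set.mem_image_of_mem y (Set.Ioc_subset_Icc_self hs)) (y' s)).2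

end Helpers
section Helpers2
set_option linter.unusedSectionVars false
open intervalIntegral
variable {V : Type*} [NormedAddCommGroup V] [InnerProductSpace ℝ V] [FiniteDimensional ℝ V]
variable {R1 : V → V → ℝ} {y y' : ℝ → V}

/-- The straight-line competitor. -/
lemma competitor_mem_line (q0 q1 : V) :
    (∫ s in (0:ℝ)..1, R1 (q0 + s • (q1 - q0)) (q1 - q0)) ∈
      {L | ∃ y y' : ℝ → V, IsACOn 0 1 y y' ∧ y 0 = q0 ∧ y 1 = q1 ∧
        L = ∫ s in (0:ℝ)..1, R1 (y s) (y' s)} := by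
  refine ⟨fun s => q0 + s • (q1 - q0), fun _ => q1 - q0,
    ⟨intervalIntegrable_const, fun t ht => ?_⟩, by simp, by simp, rfl⟩
  simp [intervalIntegral.integral_const, smul_sub]

lemma competitor_nonneg (hR : IsFinsler R1) {q0 q1 : V} {L : ℝ}
    (hL : L ∈ {L | ∃ y y' : ℝ → V, IsACOn 0 1 y y' ∧ y 0 = q0 ∧ y 1 = q1 ∧
      L = ∫ s in (0:ℝ)..1, R1 (y s) (y' s)}) : 0 ≤ L := by
  obtain ⟨y, y', hy, h0, h1, rfl⟩ := hL
  exact intervalIntegral.integral_nonneg zero_le_one (fun u _ => hR.nonneg _ _)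

lemma finslerDist_nonneg (hR : IsFinsler R1) (q0 q1 : V) : 0 ≤ finslerDist R1 q0 q1 :=
  Real.sInf_nonneg (fun L hL => competitor_nonneg hR hL)

lemma finslerDist_le_line (hR : IsFinsler R1) (q0 q1 : V) :
    finslerDist R1 q0 q1 ≤ ∫ s in (0:ℝ)..1, R1 (q0 + s • (q1 - q0)) (q1 - q0) :=
  csInf_le ⟨0, fun L hL => competitor_nonneg hR hL⟩ (competitor_mem_line q0 q1)

/-- Lower bound on the integral of a path staying in the unit ball. -/
lemma path_lb_in (hR : IsFinsler R1) (h : IsACOn 0 1 y y') {q : V} {c : ℝ} (hc0 : 0 ≤ c)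
    (hc : ∀ x ∈ Metric.closedBall q 1, ∀ v, c * ‖v‖ ≤ R1 x v)
    {τ : ℝ} (hτ : τ ∈ Set.Icc (0:ℝ) 1)
    (hin : ∀ s ∈ Set.Icc (0:ℝ) τ, y s ∈ Metric.closedBall q 1) :
    c * ‖y τ - y 0‖ ≤ ∫ s in (0:ℝ)..τ, R1 (y s) (y' s) := by
  have hsub : Set.uIcc (0:ℝ) τ ⊆ Set.uIcc (0:ℝ) 1 := by
    rw [Set.uIcc_of_le hτ.1, Set.uIcc_of_le zero_le_one]
    exact Set.Icc_subset_Icc le_rfl hτ.2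
  have hy'int : IntervalIntegrable y' MeasureTheory.volume 0 τ := h.intg.mono_set hsub
  have hRint : IntervalIntegrable (fun s => R1 (y s) (y' s)) MeasureTheory.volume 0 τ :=
    (integrand_integrable hR h).mono_set hsub
  calc c * ‖y τ - y 0‖ = c * ‖∫ s in (0:ℝ)..τ, y' s‖ := by rw [acOn_sub_integral h hτ]
    _ ≤ c * ∫ s in (0:ℝ)..τ, ‖y' s‖ := by
        exact mul_le_mul_of_nonneg_left
          (intervalIntegral.norm_integral_le_integral_norm hτ.1) hc0
    _ = ∫ s in (0:ℝ)..τ, c * ‖y' s‖ := by rw [intervalIntegral.integral_const_mul]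
    _ ≤ ∫ s in (0:ℝ)..τ, R1 (y s) (y' s) := by
        refine intervalIntegral.integral_mono_on hτ.1 (hy'int.norm.const_mul c) hRint
          (fun s hs => hc (y s) (hin s hs) (y' s))

/-- If the path exits the ball of radius `ρ`, its length is at least `c * ρ`. -/
lemma path_lb_exit (hR : IsFinsler R1) (h : IsACOn 0 1 y y') {q : V} (hy0 : y 0 = q)
    {c ρ : ℝ} (hc0 : 0 ≤ c) (hρ : 0 < ρ) (hρ1 : ρ ≤ 1)
    (hc : ∀ x ∈ Metric.closedBall q 1, ∀ v, c * ‖v‖ ≤ R1 x v)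
    (hout : ∃ s₀ ∈ Set.Icc (0:ℝ) 1, ρ < ‖y s₀ - q‖) :
    c * ρ ≤ ∫ s in (0:ℝ)..1, R1 (y s) (y' s) := by
  obtain ⟨s₀, hs₀, hs₀ρ⟩ := hout
  have hycont : ContinuousOn y (Set.Icc 0 1) := acOn_continuousOn h
  have hncont : ContinuousOn (fun s => ‖y s - q‖) (Set.Icc 0 1) :=
    (hycont.sub continuousOn_const).norm
  set K : Set ℝ := {s ∈ Set.Icc (0:ℝ) 1 | ρ ≤ ‖y s - q‖} with hK
  have hKne : K.Nonempty := ⟨s₀, hs₀, hs₀ρ.le⟩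
  have hKclosed : IsClosed K := by
    have heq : K = Set.Icc (0:ℝ) 1 ∩ (fun s => ‖y s - q‖) ⁻¹' Set.Ici ρ := by
      ext s; simp [hK]
    rw [heq]
    exact hncont.preimage_isClosed_of_isClosed isClosed_Icc isClosed_Ici
  have hKcomp : IsCompact K := isCompact_Icc.of_isClosed_subset hKclosed (fun s hs => hs.1)
  set τ := sInf K with hτdef
  have hτK : τ ∈ K := hKcomp.sInf_mem hKne
  have hτIcc : τ ∈ Set.Icc (0:ℝ) 1 := hτK.1
  have hlt : ∀ s, 0 ≤ s → s < τ → ‖y s - q‖ < ρ := by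
    intro s hs0 hsτ
    by_contra hcon
    push_neg at hcon
    exact absurd (csInf_le hKcomp.bddBelow ⟨⟨hs0, hsτ.le.trans hτIcc.2⟩, hcon⟩)
      (not_le.2 hsτ)
  -- intermediate value: first touching of the sphere
  have hτρ : ‖y τ - q‖ = ρ := by
    have hIVT := intermediate_value_Icc hτIcc.1
      (hncont.mono (Set.Icc_subset_Icc le_rfl hτIcc.2))
    have hρmem : ρ ∈ Set.Icc ‖y 0 - q‖ ‖y τ - q‖ := by
      constructor
      · rw [hy0]; simpa using hρ.le
      · exact hτK.2
    obtain ⟨τ', hτ'mem, hτ'⟩ := hIVT hρmem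
    have hττ' : τ ≤ τ' := csInf_le hKcomp.bddBelow
      ⟨⟨hτ'mem.1, hτ'mem.2.trans hτIcc.2⟩, hτ'.ge⟩
    have heq2 : τ' = τ := le_antisymm hτ'mem.2 hττ'
    rw [← heq2]; exact hτ'
  have hin : ∀ s ∈ Set.Icc (0:ℝ) τ, y s ∈ Metric.closedBall q 1 := by
    intro s hs
    rcases lt_or_eq_of_le hs.2 with hlt' | heq
    · exact Metric.mem_closedBall.2 (by
        rw [dist_eq_norm]; exact ((hlt s hs.1 hlt').le.trans hρ1))
    · rw [heq]
      exact Metric.mem_closedBall.2 (by rw [dist_eq_norm, hτρ]; exact hρ1)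
  have h1 : c * ρ ≤ ∫ s in (0:ℝ)..τ, R1 (y s) (y' s) := by
    have hlb := path_lb_in hR h hc0 hc hτIcc hin
    rw [hy0, hτρ] at hlb
    exact hlb
  have hsub : Set.uIcc τ (1:ℝ) ⊆ Set.uIcc (0:ℝ) 1 := by
    rw [Set.uIcc_of_le hτIcc.2, Set.uIcc_of_le zero_le_one]
    exact Set.Icc_subset_Icc hτIcc.1 le_rfl
  have hsub0 : Set.uIcc (0:ℝ) τ ⊆ Set.uIcc (0:ℝ) 1 := by
    rw [Set.uIcc_of_le hτIcc.1, Set.uIcc_of_le zero_le_one]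
    exact Set.Icc_subset_Icc le_rfl hτIcc.2
  have hsplit : (∫ s in (0:ℝ)..τ, R1 (y s) (y' s)) + ∫ s in τ..1, R1 (y s) (y' s)
      = ∫ s in (0:ℝ)..1, R1 (y s) (y' s) :=
    intervalIntegral.integral_add_adjacent_intervals
      ((integrand_integrable hR h).mono_set hsub0)
      ((integrand_integrable hR h).mono_set hsub)
  have htail : 0 ≤ ∫ s in τ..1, R1 (y s) (y' s) :=
    intervalIntegral.integral_nonneg hτIcc.2 (fun u _ => hR.nonneg _ _)
  linarith

/-- Lower bound for the Finsler distance. -/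
lemma finslerDist_lb (hR : IsFinsler R1) {q p : V} {c ρ : ℝ} (hc0 : 0 ≤ c)
    (hρ : 0 < ρ) (hρ1 : ρ ≤ 1)
    (hc : ∀ x ∈ Metric.closedBall q 1, ∀ v, c * ‖v‖ ≤ R1 x v) :
    c * min ‖p - q‖ ρ ≤ finslerDist R1 q p := by
  refine le_csInf ⟨_, competitor_mem_line q p⟩ (fun L hL => ?_)
  obtain ⟨y, y', hy, h0, h1, rfl⟩ := hL
  by_cases hall : ∀ s ∈ Set.Icc (0:ℝ) 1, y s ∈ Metric.closedBall q 1
  · calc c * min ‖p - q‖ ρ ≤ c * ‖p - q‖ :=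
        mul_le_mul_of_nonneg_left (min_le_left _ _) hc0
      _ = c * ‖y 1 - y 0‖ := by rw [h0, h1]
      _ ≤ _ := path_lb_in hR hy hc0 hc ⟨zero_le_one, le_rfl⟩ hall
  · push_neg at hall
    obtain ⟨s₀, hs₀, hs₀'⟩ := hall
    have hout : ∃ s₀ ∈ Set.Icc (0:ℝ) 1, ρ < ‖y s₀ - q‖ := by
      refine ⟨s₀, hs₀, ?_⟩
      have : 1 < ‖y s₀ - q‖ := by
        rw [Metric.mem_closedBall, dist_eq_norm] at hs₀'
        linarith [not_le.1 hs₀']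
      linarith
    calc c * min ‖p - q‖ ρ ≤ c * ρ :=
        mul_le_mul_of_nonneg_left (min_le_right _ _) hc0
      _ ≤ _ := path_lb_exit hR hy h0 hc0 hρ hρ1 hc hout

end Helpers2
section Helpers3
set_option linter.unusedSectionVars false
open intervalIntegral
variable {V : Type*} [NormedAddCommGroup V] [InnerProductSpace ℝ V] [FiniteDimensional ℝ V]
variable {R1 : V → V → ℝ}

lemma energy_seg [CompleteSpace V] {E Et : ℝ → V → ℝ} {DqE : ℝ → V → V}
    (hE : IsC1Energy E Et DqE) (t : ℝ) (p q : V) :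
    E t q - E t p = ∫ s in (0:ℝ)..1, (inner ℝ (DqE t (p + s • (q - p))) (q - p) : ℝ) := by
  have hderiv : ∀ s : ℝ, HasDerivAt (fun r : ℝ => E t (p + r • (q - p)))
      (inner ℝ (DqE t (p + s • (q - p))) (q - p) : ℝ) s := by
    intro s
    have hgrad := (hE.hasGrad t (p + s • (q - p))).hasFDerivAt
    have hline : HasDerivAt (fun r : ℝ => p + r • (q - p)) (q - p) s := by
      simpa using ((hasDerivAt_id s).smul_const (q - p)).const_add p
    have hcomp := hgrad.comp_hasDerivAt s hline
    simp [InnerProductSpace.toDual_apply_apply] at hcomp; exact hcomp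
  have hcont : Continuous fun s : ℝ => (inner ℝ (DqE t (p + s • (q - p))) (q - p) : ℝ) := by
    refine Continuous.inner ?_ continuous_const
    exact hE.contDqE.comp (continuous_const.prodMk
      (continuous_const.add (continuous_id.smul continuous_const)))
  rw [intervalIntegral.integral_eq_sub_of_hasDerivAt (fun s _ => hderiv s)
    (hcont.intervalIntegrable 0 1)]
  simp

lemma R1_uniform_close (hR : IsFinsler R1) (q : V) {η : ℝ} (hη : 0 < η) :
    ∃ ρ : ℝ, 0 < ρ ∧ ρ ≤ 1 ∧ ∀ x, dist x q ≤ ρ → ∀ v,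
      R1 q v ≤ R1 x v + η * ‖v‖ ∧ R1 x v ≤ R1 q v + η * ‖v‖ := by
  have hKc : IsCompact (Metric.closedBall q 1 ×ˢ Metric.sphere (0:V) 1) :=
    (isCompact_closedBall q 1).prod (isCompact_sphere 0 1)
  have huc := hKc.uniformContinuousOn_of_continuous hR.cont.continuousOn
  rw [Metric.uniformContinuousOn_iff] at huc
  obtain ⟨δ, hδ, hδ'⟩ := huc η hη
  refine ⟨min (δ/2) 1, by positivity, min_le_right _ _, fun x hx v => ?_⟩
  by_cases hv : v = 0
  · simp [hv, R1_zero hR]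
  · set u := ‖v‖⁻¹ • v with hu
    have husph : u ∈ Metric.sphere (0:V) 1 := by
      simp [hu, norm_smul, norm_inv, inv_mul_cancel₀ (norm_ne_zero_iff.2 hv)]
    have hx1 : x ∈ Metric.closedBall q 1 :=
      Metric.mem_closedBall.2 (hx.trans (min_le_right _ _))
    have hq1 : q ∈ Metric.closedBall q 1 := Metric.mem_closedBall_self zero_le_one
    have hdist : dist ((q : V), u) ((x : V), u) < δ := by
      rw [Prod.dist_eq]
      simp only [dist_self, max_eq_left dist_nonneg]
      calc dist q x ≤ min (δ/2) 1 := by rwa [dist_comm]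
        _ ≤ δ/2 := min_le_left _ _
        _ < δ := by linarith
    have hcl := hδ' (q, u) (Set.mk_mem_prod hq1 husph) (x, u) (Set.mk_mem_prod hx1 husph) hdist
    rw [Real.dist_eq, abs_lt] at hcl
    have hqu : R1 q u ≤ R1 x u + η := by linarith [hcl.2]
    have hxu : R1 x u ≤ R1 q u + η := by linarith [hcl.1]
    rw [R1_scale hR q hv, R1_scale hR x hv]
    constructor
    · calc ‖v‖ * R1 q u ≤ ‖v‖ * (R1 x u + η) :=
          mul_le_mul_of_nonneg_left hqu (norm_nonneg v)
        _ = ‖v‖ * R1 x u + η * ‖v‖ := by ring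
    · calc ‖v‖ * R1 x u ≤ ‖v‖ * (R1 q u + η) :=
          mul_le_mul_of_nonneg_left hxu (norm_nonneg v)
        _ = ‖v‖ * R1 q u + η * ‖v‖ := by ring

lemma localSlope_facts {DqE : ℝ → V → V} (hR : IsFinsler R1) (t : ℝ) (q : V)
    [Nontrivial V] {c : ℝ} (hc : 0 < c) (hcq : ∀ v : V, c * ‖v‖ ≤ R1 q v) :
    BddAbove {r | ∃ v : V, v ≠ 0 ∧ r = (inner ℝ (DqE t q) v : ℝ) / R1 q v} ∧
    {r | ∃ v : V, v ≠ 0 ∧ r = (inner ℝ (DqE t q) v : ℝ) / R1 q v}.Nonempty ∧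
    0 ≤ localSlope R1 DqE t q ∧
    (∀ u : V, (inner ℝ (DqE t q) u : ℝ) ≤ localSlope R1 DqE t q * R1 q u) := by
  set w := DqE t q with hw
  set S := {r | ∃ v : V, v ≠ 0 ∧ r = (inner ℝ w v : ℝ) / R1 q v} with hS
  have hpos : ∀ v : V, v ≠ 0 → 0 < R1 q v := fun v hv =>
    lt_of_lt_of_le (mul_pos hc (norm_pos_iff.2 hv)) (hcq v)
  have hbdd : BddAbove S := by
    refine ⟨‖w‖ / c, fun r hr => ?_⟩
    obtain ⟨v, hv, rfl⟩ := hr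
    rw [div_le_iff₀ (hpos v hv)]
    calc (inner ℝ w v : ℝ) ≤ ‖w‖ * ‖v‖ := real_inner_le_norm w v
      _ = (‖w‖ / c) * (c * ‖v‖) := by field_simp
      _ ≤ (‖w‖ / c) * R1 q v := by
          exact mul_le_mul_of_nonneg_left (hcq v) (by positivity)
  obtain ⟨v₀, hv₀⟩ := exists_ne (0 : V)
  have hne : S.Nonempty := ⟨_, v₀, hv₀, rfl⟩
  have hmem1 : (inner ℝ w v₀ : ℝ) / R1 q v₀ ∈ S := ⟨v₀, hv₀, rfl⟩
  have hmem2 : -((inner ℝ w v₀ : ℝ) / R1 q v₀) ∈ S := by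
    refine ⟨-v₀, neg_ne_zero.2 hv₀, ?_⟩
    rw [inner_neg_right, R1_neg hR, neg_div]
  have hL0 : 0 ≤ localSlope R1 DqE t q := by
    rcases le_or_gt 0 ((inner ℝ w v₀ : ℝ) / R1 q v₀) with h | h
    · exact h.trans (le_csSup hbdd hmem1)
    · exact (by linarith : (0:ℝ) ≤ -((inner ℝ w v₀ : ℝ) / R1 q v₀)).trans (le_csSup hbdd hmem2)
  refine ⟨hbdd, hne, hL0, fun u => ?_⟩
  by_cases hu : u = 0
  · simp [hu, R1_zero hR, inner_zero_right]
  · have hmem : (inner ℝ w u : ℝ) / R1 q u ∈ S := ⟨u, hu, rfl⟩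
    have := le_csSup hbdd hmem
    rw [div_le_iff₀ (hpos u hu)] at this
    exact this

end Helpers3
section Helpers4
set_option linter.unusedSectionVars false
open intervalIntegral
variable {V : Type*} [NormedAddCommGroup V] [InnerProductSpace ℝ V] [FiniteDimensional ℝ V]
variable {R1 : V → V → ℝ}

lemma path_energy_ub [CompleteSpace V] {E Et : ℝ → V → ℝ} {DqE : ℝ → V → V}
    (hR : IsFinsler R1) (hE : IsC1Energy E Et DqE) (t : ℝ) {q : V} {y y' : ℝ → V}
    (h : IsACOn 0 1 y y') (hy0 : y 0 = q)
    {L c η ρ : ℝ} (hc : 0 < c) (hη : 0 < η) (hρ : 0 < ρ) (hρ1 : ρ ≤ 1)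
    (hL0 : 0 ≤ L) (hkey : ∀ u : V, (inner ℝ (DqE t q) u : ℝ) ≤ L * R1 q u)
    (hcball : ∀ x ∈ Metric.closedBall q 1, ∀ v, c * ‖v‖ ≤ R1 x v)
    (hgradclose : ∀ x, dist x q ≤ ρ → ‖DqE t x - DqE t q‖ ≤ η)
    (hR1close : ∀ x, dist x q ≤ ρ → ∀ v, R1 q v ≤ R1 x v + η * ‖v‖)
    (hin : ∀ s ∈ Set.Icc (0:ℝ) 1, dist (y s) q ≤ ρ) :
    E t q - E t (y 1) ≤ (L + (L+1) * η / c) * ∫ s in (0:ℝ)..1, R1 (y s) (y' s) := by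
  set w := DqE t q with hw
  set p := y 1 with hp
  -- abbreviations for the three integrals
  set IR := ∫ s in (0:ℝ)..1, R1 (y s) (y' s) with hIR
  set IN := ∫ s in (0:ℝ)..1, ‖y' s‖ with hIN
  have hRint : IntervalIntegrable (fun s => R1 (y s) (y' s)) MeasureTheory.volume 0 1 :=
    integrand_integrable hR h
  have hNint : IntervalIntegrable (fun s => ‖y' s‖) MeasureTheory.volume 0 1 := h.intg.norm
  -- step 2: segment stays in the ball
  have hseg_in : ∀ s ∈ Set.Icc (0:ℝ) 1, dist (p + s • (q - p)) q ≤ ρ := by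
    intro s hs
    have heq : p + s • (q - p) - q = (1 - s) • (p - q) := by
      module
    rw [dist_eq_norm, heq, norm_smul, Real.norm_eq_abs, abs_of_nonneg (by linarith [hs.2])]
    calc (1 - s) * ‖p - q‖ ≤ 1 * ‖p - q‖ :=
        mul_le_mul_of_nonneg_right (by linarith [hs.1]) (norm_nonneg _)
      _ = dist p q := by rw [one_mul, dist_eq_norm]
      _ ≤ ρ := hin 1 ⟨zero_le_one, le_rfl⟩
  -- step 1+3+4: energy difference vs linear part
  have hcont : Continuous fun s : ℝ => (inner ℝ (DqE t (p + s • (q - p))) (q - p) : ℝ) := by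
    refine Continuous.inner ?_ continuous_const
    exact hE.contDqE.comp (continuous_const.prodMk
      (continuous_const.add (continuous_id.smul continuous_const)))
  have hEdiff : E t q - E t p ≤ (inner ℝ w (q - p) : ℝ) + η * ‖q - p‖ := by
    rw [energy_seg hE t p q]
    have hmono : ∫ s in (0:ℝ)..1, (inner ℝ (DqE t (p + s • (q - p))) (q - p) : ℝ)
        ≤ ∫ _ in (0:ℝ)..1, ((inner ℝ w (q - p) : ℝ) + η * ‖q - p‖) := by
      refine intervalIntegral.integral_mono_on zero_le_one (hcont.intervalIntegrable 0 1)
        intervalIntegrable_const (fun s hs => ?_)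
      have hsub : (inner ℝ (DqE t (p + s • (q - p))) (q - p) : ℝ) - (inner ℝ w (q - p) : ℝ)
          = (inner ℝ (DqE t (p + s • (q - p)) - w) (q - p) : ℝ) := by
        rw [inner_sub_left]
      have hcs : (inner ℝ (DqE t (p + s • (q - p)) - w) (q - p) : ℝ)
          ≤ ‖DqE t (p + s • (q - p)) - w‖ * ‖q - p‖ := real_inner_le_norm _ _
      have hsmall : ‖DqE t (p + s • (q - p)) - w‖ ≤ η := hgradclose _ (hseg_in s hs)
      nlinarith [norm_nonneg (q - p), mul_le_mul_of_nonneg_right hsmall (norm_nonneg (q - p))]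
    simpa using hmono
  -- step 5
  have hsub1 : ∫ s in (0:ℝ)..1, (inner ℝ w (y' s) : ℝ) = (inner ℝ w (p - q) : ℝ) := by
    have hcomm := (innerSL ℝ w).intervalIntegral_comp_comm h.intg (a := 0) (b := 1)
      (μ := MeasureTheory.volume)
    simp only [innerSL_apply_apply] at hcomm
    rw [hcomm, acOn_sub_integral h ⟨zero_le_one, le_rfl⟩, hy0, ← hp]
  have hwint : IntervalIntegrable (fun s => (inner ℝ w (y' s) : ℝ)) MeasureTheory.volume 0 1 := by
    constructor
    · exact (innerSL ℝ w).integrable_comp h.intg.1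
    · exact (innerSL ℝ w).integrable_comp h.intg.2
  -- step 6+8
  have hlin : (inner ℝ w (q - p) : ℝ) ≤ L * IR + L * η * IN := by
    have heq : (inner ℝ w (q - p) : ℝ) = ∫ s in (0:ℝ)..1, -(inner ℝ w (y' s) : ℝ) := by
      rw [intervalIntegral.integral_neg, hsub1, ← inner_neg_right]
      congr 1; abel
    rw [heq]
    have hmono : ∫ s in (0:ℝ)..1, -(inner ℝ w (y' s) : ℝ)
        ≤ ∫ s in (0:ℝ)..1, (L * R1 (y s) (y' s) + L * η * ‖y' s‖) := by
      refine intervalIntegral.integral_mono_on zero_le_one hwint.neg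
        ((hRint.const_mul L).add (hNint.const_mul (L * η))) (fun s hs => ?_)
      have h1 : -(inner ℝ w (y' s) : ℝ) = (inner ℝ w (-(y' s)) : ℝ) := by rw [inner_neg_right]
      have h2 : (inner ℝ w (-(y' s)) : ℝ) ≤ L * R1 q (-(y' s)) := hkey _
      rw [R1_neg hR] at h2
      have h3 : R1 q (y' s) ≤ R1 (y s) (y' s) + η * ‖y' s‖ := hR1close _ (hin s hs) _
      have h4 : L * R1 q (y' s) ≤ L * (R1 (y s) (y' s) + η * ‖y' s‖) :=
        mul_le_mul_of_nonneg_left h3 hL0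
      rw [h1]
      nlinarith
    rw [intervalIntegral.integral_add (hRint.const_mul L) (hNint.const_mul (L * η)),
      intervalIntegral.integral_const_mul, intervalIntegral.integral_const_mul] at hmono
    exact hmono
  -- step 9
  have hnorm' : c * IN ≤ IR := by
    have hmono : ∫ s in (0:ℝ)..1, c * ‖y' s‖ ≤ IR := by
      refine intervalIntegral.integral_mono_on zero_le_one (hNint.const_mul c) hRint
        (fun s hs => ?_)
      exact hcball (y s) (Metric.mem_closedBall.2 ((hin s hs).trans hρ1)) (y' s)
    rwa [intervalIntegral.integral_const_mul] at hmono
  -- step 10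
  have hqp : ‖q - p‖ ≤ IN := by
    have : ‖p - q‖ ≤ IN := by
      rw [hp, ← hy0, ← acOn_sub_integral h ⟨zero_le_one, le_rfl⟩]
      exact intervalIntegral.norm_integral_le_integral_norm zero_le_one
    rwa [norm_sub_rev]
  have hIN0 : 0 ≤ IN := intervalIntegral.integral_nonneg zero_le_one (fun u _ => norm_nonneg _)
  have hIR0 : 0 ≤ IR := intervalIntegral.integral_nonneg zero_le_one (fun u _ => hR.nonneg _ _)
  -- final combination
  have hfinal : (L+1) * η * IN ≤ ((L+1) * η / c) * IR := by
    have h5 := mul_le_mul_of_nonneg_left hnorm' (show (0:ℝ) ≤ (L+1) * η / c by positivity)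
    calc (L+1) * η * IN = ((L+1) * η / c) * (c * IN) := by field_simp
      _ ≤ ((L+1) * η / c) * IR := h5
  have hηqp : η * ‖q - p‖ ≤ η * IN := mul_le_mul_of_nonneg_left hqp hη.le
  calc E t q - E t p ≤ (inner ℝ w (q - p) : ℝ) + η * ‖q - p‖ := hEdiff
    _ ≤ L * IR + L * η * IN + η * IN := by linarith
    _ = L * IR + (L+1) * η * IN := by ring
    _ ≤ L * IR + ((L+1) * η / c) * IR := by linarith
    _ = (L + (L+1) * η / c) * IR := by ring

end Helpers4
section Helpers5
set_option linter.unusedSectionVars false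
open intervalIntegral
variable {V : Type*} [NormedAddCommGroup V] [InnerProductSpace ℝ V] [FiniteDimensional ℝ V]
variable {R1 : V → V → ℝ}

lemma line_integrand_cont (hR : IsFinsler R1) (q0 q1 : V) :
    Continuous fun s : ℝ => R1 (q0 + s • (q1 - q0)) (q1 - q0) :=
  hR.cont.comp ((continuous_const.add (continuous_id.smul continuous_const)).prodMk
    continuous_const)

lemma finslerDist_le_const (hR : IsFinsler R1) {q : V} {C : ℝ}
    (hC1 : ∀ x ∈ Metric.closedBall q 1, ∀ v, R1 x v ≤ C * ‖v‖)
    (u : V) (hu : ‖u‖ ≤ 1) : finslerDist R1 q (q + u) ≤ C * ‖u‖ := by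
  refine (finslerDist_le_line hR q (q + u)).trans ?_
  have heq : q + u - q = u := by abel
  have hmono : ∫ s in (0:ℝ)..1, R1 (q + s • (q + u - q)) (q + u - q)
      ≤ ∫ _ in (0:ℝ)..1, C * ‖u‖ := by
    refine intervalIntegral.integral_mono_on zero_le_one
      ((line_integrand_cont hR q (q + u)).intervalIntegrable 0 1)
      intervalIntegrable_const (fun s hs => ?_)
    rw [heq]
    refine hC1 _ ?_ u
    rw [Metric.mem_closedBall, dist_eq_norm, add_sub_cancel_left, norm_smul,
      Real.norm_eq_abs, abs_of_nonneg hs.1]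
    exact mul_le_one₀ hs.2 (norm_nonneg u) hu
  simpa using hmono

lemma finslerDist_line_ub (hR : IsFinsler R1) (q v : V) {η : ℝ} (hη : 0 < η) :
    ∀ᶠ h in nhdsWithin (0:ℝ) (Set.Ioi 0),
      finslerDist R1 q (q - h • v) ≤ h * (R1 q v + η) := by
  obtain ⟨ρ, hρ, hρ1, hcl⟩ := R1_uniform_close hR q (η := η / (‖v‖ + 1))
    (by positivity)
  have hρv : (0:ℝ) < ρ / (‖v‖ + 1) := by positivity
  have hev1 : ∀ᶠ h in nhdsWithin (0:ℝ) (Set.Ioi 0), h < ρ / (‖v‖ + 1) :=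
    ((gt_mem_nhds hρv).filter_mono nhdsWithin_le_nhds)
  have hev2 : ∀ᶠ h in nhdsWithin (0:ℝ) (Set.Ioi 0), h ∈ Set.Ioi (0:ℝ) :=
    self_mem_nhdsWithin
  filter_upwards [hev1, hev2] with h hhρ hh0
  replace hh0 : 0 < h := hh0
  have key : ∀ s ∈ Set.Icc (0:ℝ) 1,
      R1 (q + s • (q - h • v - q)) (q - h • v - q) ≤ h * (R1 q v + η) := by
    intro s hs
    have hsub : q - h • v - q = -(h • v) := by abel
    rw [hsub]
    have h1 : R1 (q + s • -(h • v)) (-(h • v)) = R1 (q + s • -(h • v)) (h • v) :=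
      R1_neg hR _ _
    rw [h1, hR.smul, abs_of_nonneg hh0.le]
    have hdistx : dist (q + s • -(h • v)) q ≤ ρ := by
      rw [dist_eq_norm, add_sub_cancel_left, norm_smul, norm_neg, norm_smul,
        Real.norm_eq_abs, Real.norm_eq_abs, abs_of_nonneg hs.1, abs_of_nonneg hh0.le]
      have hv1 : ‖v‖ ≤ ‖v‖ + 1 := by linarith
      calc s * (h * ‖v‖) ≤ 1 * (h * ‖v‖) :=
          mul_le_mul_of_nonneg_right hs.2 (by positivity)
        _ = h * ‖v‖ := one_mul _
        _ ≤ (ρ / (‖v‖ + 1)) * (‖v‖ + 1) := by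
            refine mul_le_mul hhρ.le hv1 (norm_nonneg v) hρv.le
        _ = ρ := by field_simp
    have h2 := (hcl _ hdistx v).2
    have h3 : (η / (‖v‖ + 1)) * ‖v‖ ≤ η := by
      rw [div_mul_eq_mul_div, div_le_iff₀ (by positivity : (0:ℝ) < ‖v‖ + 1)]
      nlinarith [norm_nonneg v]
    have h4 : R1 (q + s • -(h • v)) v ≤ R1 q v + η := by linarith
    exact mul_le_mul_of_nonneg_left h4 hh0.le
  refine (finslerDist_le_line hR q (q - h • v)).trans ?_
  have hmono : ∫ s in (0:ℝ)..1, R1 (q + s • (q - h • v - q)) (q - h • v - q)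
      ≤ ∫ _ in (0:ℝ)..1, h * (R1 q v + η) :=
    intervalIntegral.integral_mono_on zero_le_one
      ((line_integrand_cont hR q (q - h • v)).intervalIntegrable 0 1)
      intervalIntegrable_const key
  simpa using hmono

lemma energy_dir_deriv [CompleteSpace V] {E Et : ℝ → V → ℝ} {DqE : ℝ → V → V}
    (hE : IsC1Energy E Et DqE) (t : ℝ) (q v : V) :
    HasDerivAt (fun h : ℝ => E t (q - h • v)) (-(inner ℝ (DqE t q) v : ℝ)) 0 := by
  have hline : HasDerivAt (fun h : ℝ => q - h • v) (-v) 0 := by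
    simpa using ((hasDerivAt_id (0:ℝ)).smul_const v).const_sub q
  have h0 : q - (0:ℝ) • v = q := by simp
  have hg := (hE.hasGrad t q).hasFDerivAt
  rw [← h0] at hg
  have hcomp := hg.comp_hasDerivAt 0 hline
  simp [InnerProductSpace.toDual_apply_apply, inner_neg_right] at hcomp; exact hcomp

end Helpers5

variable {d : ℕ}

set_option maxHeartbeats 1000000 in
theorem statement1 (T : ℝ) (hT : 0 < T)
    (R1 : EuclideanSpace ℝ (Fin d) → EuclideanSpace ℝ (Fin d) → ℝ)
    (hR : IsFinsler R1) (hcomp : IsCompleteD (finslerDist R1))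
    (E Et : ℝ → EuclideanSpace ℝ (Fin d) → ℝ)
    (DqE : ℝ → EuclideanSpace ℝ (Fin d) → EuclideanSpace ℝ (Fin d))
    (hE : IsC1Energy E Et DqE)
    (t : ℝ) (ht : t ∈ Set.Icc 0 T) (q : EuclideanSpace ℝ (Fin d)) :
    localSlope R1 DqE t q =
      Filter.limsup (fun p => max (E t q - E t p) 0 / finslerDist R1 q p)
        (⨅ ε ∈ Set.Ioi (0:ℝ),
          Filter.principal {p | finslerDist R1 q p < ε ∧ p ≠ q}) := by
  classical
  set F := ⨅ ε ∈ Set.Ioi (0:ℝ),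
      Filter.principal {p : EuclideanSpace ℝ (Fin d) | finslerDist R1 q p < ε ∧ p ≠ q}
    with hFdef
  have hbasis : F.HasBasis (fun ε : ℝ => ε ∈ Set.Ioi (0:ℝ))
      (fun ε => {p : EuclideanSpace ℝ (Fin d) | finslerDist R1 q p < ε ∧ p ≠ q}) := by
    rw [hFdef]
    refine Filter.hasBasis_biInf_principal ?_ ⟨1, Set.mem_Ioi.2 one_pos⟩
    rintro ε₁ h₁ ε₂ h₂
    exact ⟨min ε₁ ε₂, Set.mem_Ioi.2 (lt_min h₁ h₂),
      fun p hp => ⟨hp.1.trans_le (min_le_left _ _), hp.2⟩,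
      fun p hp => ⟨hp.1.trans_le (min_le_right _ _), hp.2⟩⟩
  rw [Filter.limsup_eq]
  rcases subsingleton_or_nontrivial (EuclideanSpace ℝ (Fin d)) with hsub | hnt
  · -- trivial case `d = 0`
    have hLS : localSlope R1 DqE t q = 0 := by
      have hempty : {r | ∃ v : EuclideanSpace ℝ (Fin d), v ≠ 0 ∧
          r = (inner ℝ (DqE t q) v : ℝ) / R1 q v} = ∅ := by
        ext r
        simp only [Set.mem_setOf_eq, Set.mem_empty_iff_false, iff_false, not_exists]
        rintro v ⟨hv, -⟩
        exact hv (Subsingleton.elim v 0)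
      rw [localSlope, hempty, Real.sSup_empty]
    have hU : {a : ℝ | ∀ᶠ p in F,
        max (E t q - E t p) 0 / finslerDist R1 q p ≤ a} = Set.univ := by
      ext a
      simp only [Set.mem_univ, iff_true, Set.mem_setOf_eq]
      refine hbasis.eventually_iff.2 ⟨1, Set.mem_Ioi.2 one_pos, fun p hp => ?_⟩
      exact absurd (Subsingleton.elim p q) hp.2
    rw [hLS]
    rw [show {a : ℝ | ∀ᶠ (n : EuclideanSpace ℝ (Fin d)) in F,
        max (E t q - E t n) 0 / finslerDist R1 q n ≤ a} = Set.univ from hU,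
      Real.sInf_of_not_bddBelow not_bddBelow_univ]
  · -- nontrivial case
    obtain ⟨c, C, hc, hC, hb⟩ := finsler_bounds hR (ProperSpace.isCompact_closedBall q 1)
    have hc1 : ∀ x ∈ Metric.closedBall q 1, ∀ v, c * ‖v‖ ≤ R1 x v :=
      fun x hx v => (hb x hx v).1
    have hC1 : ∀ x ∈ Metric.closedBall q 1, ∀ v, R1 x v ≤ C * ‖v‖ :=
      fun x hx v => (hb x hx v).2
    have hcq : ∀ v, c * ‖v‖ ≤ R1 q v := hc1 q (Metric.mem_closedBall_self zero_le_one)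
    obtain ⟨hbddS, hneS, hL0, hkey⟩ := localSlope_facts (DqE := DqE) hR t q hc hcq
    set L := localSlope R1 DqE t q with hLdef
    have dnn : ∀ p, 0 ≤ finslerDist R1 q p := fun p => finslerDist_nonneg hR q p
    have hdpos : ∀ p : EuclideanSpace ℝ (Fin d), p ≠ q → 0 < finslerDist R1 q p := by
      intro p hp
      have h1 := finslerDist_lb hR (q := q) (p := p) hc.le one_pos le_rfl hc1
      have h2 : 0 < ‖p - q‖ := norm_pos_iff.2 (sub_ne_zero.2 hp)
      have h3 : 0 < c * min ‖p - q‖ 1 := mul_pos hc (lt_min h2 one_pos)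
      linarith
    have hfnn : ∀ p : EuclideanSpace ℝ (Fin d),
        0 ≤ max (E t q - E t p) 0 / finslerDist R1 q p :=
      fun p => div_nonneg (le_max_right _ _) (dnn p)
    show L = sInf {a : ℝ | ∀ᶠ p in F, max (E t q - E t p) 0 / finslerDist R1 q p ≤ a}
    set S := {a : ℝ | ∀ᶠ p in F, max (E t q - E t p) 0 / finslerDist R1 q p ≤ a}
      with hSdef
    -- Part 1: every member of S is at least L
    have hS_lb : ∀ a ∈ S, L ≤ a := by
      intro a ha
      rw [hSdef, Set.mem_setOf_eq, hbasis.eventually_iff] at ha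
      obtain ⟨ε₀, hε₀', hall⟩ := ha
      rw [Set.mem_Ioi] at hε₀'
      by_contra hcon
      push_neg at hcon
      rcases lt_or_ge a 0 with ha0 | ha0
      · -- a < 0 : impossible since the function is nonnegative
        obtain ⟨v, hv⟩ := exists_ne (0 : EuclideanSpace ℝ (Fin d))
        have hvn : (0:ℝ) < ‖v‖ := norm_pos_iff.2 hv
        set r := min 1 (ε₀ / (2 * (C + 1))) with hrdef
        have hrpos : 0 < r := lt_min one_pos (div_pos hε₀' (by linarith))
        set u := (r * ‖v‖⁻¹) • v with hudef
        have hun : ‖u‖ = r := by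
          rw [hudef, norm_smul, Real.norm_eq_abs,
            abs_of_nonneg (mul_nonneg hrpos.le (inv_nonneg.2 hvn.le))]
          field_simp
        have hu0 : u ≠ 0 := by
          rw [hudef]
          exact smul_ne_zero (ne_of_gt (mul_pos hrpos (inv_pos.2 hvn))) hv
        have hr1 : ‖u‖ ≤ 1 := by rw [hun]; exact min_le_left _ _
        have hd1 : finslerDist R1 q (q + u) ≤ C * r := by
          have := finslerDist_le_const hR hC1 u hr1
          rwa [hun] at this
        have hd2 : C * r < ε₀ := by
          have hrle : r ≤ ε₀ / (2 * (C + 1)) := min_le_right _ _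
          have h8 : C * r ≤ C * (ε₀ / (2 * (C + 1))) :=
            mul_le_mul_of_nonneg_left hrle hC
          have h9 : C * (ε₀ / (2 * (C + 1))) = ε₀ * (C / (2 * (C + 1))) := by ring
          have h10 : C / (2 * (C + 1)) < 1 := by
            rw [div_lt_one (by linarith)]
            linarith
          nlinarith
        have hppq : q + u ≠ q := fun heq => hu0 (add_eq_left.1 heq)
        have hle := hall (show q + u ∈ {p : EuclideanSpace ℝ (Fin d) |
          finslerDist R1 q p < ε₀ ∧ p ≠ q} from ⟨lt_of_le_of_lt hd1 hd2, hppq⟩)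
        have := hfnn (q + u)
        linarith
      · -- 0 ≤ a < L : use an almost-maximizing direction
        have hcon' : a < sSup {r | ∃ v : EuclideanSpace ℝ (Fin d), v ≠ 0 ∧
            r = (inner ℝ (DqE t q) v : ℝ) / R1 q v} := hcon
        obtain ⟨rr, hrrS, harr⟩ := exists_lt_of_lt_csSup hneS hcon'
        obtain ⟨v, hv, rfl⟩ := hrrS
        have hRv : 0 < R1 q v :=
          lt_of_lt_of_le (mul_pos hc (norm_pos_iff.2 hv)) (hcq v)
        rw [lt_div_iff₀ hRv] at harr
        set gap := (inner ℝ (DqE t q) v : ℝ) - a * R1 q v with hgapdef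
        have hgappos : 0 < gap := by rw [hgapdef]; linarith
        have ha1 : (0:ℝ) < a + 1 := by linarith
        set η₂ := gap / (4 * (a + 1)) with hη₂def
        have hη₂pos : 0 < η₂ := div_pos hgappos (by linarith)
        set D := R1 q v + η₂ with hDdef
        have hDpos : 0 < D := by rw [hDdef]; linarith
        set N := (inner ℝ (DqE t q) v : ℝ) - gap / 4 with hNdef
        have hwv : a * R1 q v ≤ (inner ℝ (DqE t q) v : ℝ) := harr.le
        have haRnn : 0 ≤ a * R1 q v := mul_nonneg ha0 hRv.le
        have hNpos : 0 < N := by rw [hNdef]; rw [hgapdef]; linarith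
        have haD : a * D < N := by
          have h8 : a * η₂ ≤ gap / 4 := by
            rw [hη₂def,
              show a * (gap / (4 * (a + 1))) = (a * gap) / (4 * (a + 1)) from by ring,
              div_le_div_iff₀ (by linarith) (by norm_num : (0:ℝ) < 4)]
            nlinarith
          rw [hDdef, hNdef, mul_add, hgapdef]
          linarith
        -- directional derivative
        have hder := energy_dir_deriv hE t q v
        rw [hasDerivAt_iff_tendsto_slope] at hder
        have hder' : Filter.Tendsto (slope (fun h : ℝ => E t (q - h • v)) 0)
            (nhdsWithin (0:ℝ) (Set.Ioi 0)) (nhds (-(inner ℝ (DqE t q) v : ℝ))) :=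
          hder.mono_left (nhdsWithin_mono 0 (fun x hx => ne_of_gt hx))
        have hslope_ev := hder'.eventually_lt_const
          (show -(inner ℝ (DqE t q) v : ℝ) < -(inner ℝ (DqE t q) v : ℝ) + gap / 4 by linarith)
        have hdist_ev := finslerDist_line_ub hR q v hη₂pos
        have hsmall_ev : ∀ᶠ h in nhdsWithin (0:ℝ) (Set.Ioi 0), h < ε₀ / D :=
          (gt_mem_nhds (div_pos hε₀' hDpos)).filter_mono nhdsWithin_le_nhds
        have hpos_ev : ∀ᶠ h in nhdsWithin (0:ℝ) (Set.Ioi 0), h ∈ Set.Ioi (0:ℝ) :=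
          self_mem_nhdsWithin
        obtain ⟨h, ⟨⟨hsl, hdub⟩, hsm⟩, hh0'⟩ :=
          (((hslope_ev.and hdist_ev).and hsmall_ev).and hpos_ev).exists
        have hh0 : 0 < h := hh0'
        set p := q - h • v with hpdef
        have hpq : p ≠ q := by
          intro heq
          rw [hpdef] at heq
          exact (smul_ne_zero (ne_of_gt hh0) hv) (sub_eq_self.1 heq)
        have hd0 : 0 < finslerDist R1 q p := hdpos p hpq
        have hdFub : finslerDist R1 q p ≤ h * D := hdub
        have hdFlt : finslerDist R1 q p < ε₀ :=
          lt_of_le_of_lt hdFub ((lt_div_iff₀ hDpos).1 hsm)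
        have hfa := hall (show p ∈ {p : EuclideanSpace ℝ (Fin d) |
          finslerDist R1 q p < ε₀ ∧ p ≠ q} from ⟨hdFlt, hpq⟩)
        -- energy difference estimate
        rw [slope_def_field] at hsl
        simp only [zero_smul, sub_zero] at hsl
        rw [div_lt_iff₀ hh0] at hsl
        have hEd : h * N < E t q - E t p := by
          rw [hpdef, hNdef]
          nlinarith
        have hstep1 : a < N / D := (lt_div_iff₀ hDpos).2 haD
        have hstep2 : N / D = (h * N) / (h * D) := by
          rw [mul_div_mul_left _ _ (ne_of_gt hh0)]
        have hstep3 : (h * N) / (h * D) ≤ (h * N) / finslerDist R1 q p := by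
          apply div_le_div_of_nonneg_left (mul_nonneg hh0.le hNpos.le) hd0 hdFub
        have hstep4 : (h * N) / finslerDist R1 q p
            ≤ (E t q - E t p) / finslerDist R1 q p := by gcongr
        have hstep5 : (E t q - E t p) / finslerDist R1 q p
            ≤ max (E t q - E t p) 0 / finslerDist R1 q p := by
          gcongr
          exact le_max_left _ _
        linarith
    -- Part 2: L + δ is a member of S for every δ > 0
    have hS_mem : ∀ δ : ℝ, 0 < δ → (L + δ) ∈ S := by
      intro δ hδ
      have hL1 : (0:ℝ) < L + 1 := by linarith
      set η := δ * c / (2 * (L + 1)) with hηdef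
      have hηpos : 0 < η := div_pos (mul_pos hδ hc) (by linarith)
      obtain ⟨ρ₁, hρ₁, hρ₁1, hclose⟩ := R1_uniform_close hR q hηpos
      have hcontx : Continuous fun x : EuclideanSpace ℝ (Fin d) => DqE t x :=
        hE.contDqE.comp (continuous_const.prodMk continuous_id)
      obtain ⟨ρ₂, hρ₂, hgrad'⟩ := Metric.continuous_iff.1 hcontx q η hηpos
      set ρ := min ρ₁ (min (ρ₂ / 2) 1) with hρdef
      have hρpos : 0 < ρ := lt_min hρ₁ (lt_min (by linarith) one_pos)
      have hρ1 : ρ ≤ 1 := le_trans (min_le_right _ _) (min_le_right _ _)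
      have hgrad : ∀ x, dist x q ≤ ρ → ‖DqE t x - DqE t q‖ ≤ η := by
        intro x hx
        have hlt : dist x q < ρ₂ :=
          lt_of_le_of_lt (hx.trans ((min_le_right _ _).trans (min_le_left _ _)))
            (by linarith)
        have hd := hgrad' x hlt
        rw [dist_eq_norm] at hd
        exact hd.le
      have hclose' : ∀ x, dist x q ≤ ρ → ∀ v, R1 q v ≤ R1 x v + η * ‖v‖ :=
        fun x hx v => (hclose x (hx.trans (min_le_left _ _)) v).1
      rw [hSdef, Set.mem_setOf_eq, hbasis.eventually_iff]
      refine ⟨c * ρ / 2, Set.mem_Ioi.2 (by nlinarith [mul_pos hc hρpos]), fun p hp => ?_⟩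
      obtain ⟨hdp, hpq⟩ := hp
      have hd0 : 0 < finslerDist R1 q p := hdpos p hpq
      have hcoefpos : (0:ℝ) ≤ L + δ / 2 := by linarith
      have hest : E t q - E t p ≤ (L + δ / 2) * finslerDist R1 q p := by
        by_contra hcon
        push_neg at hcon
        set ε' := E t q - E t p - (L + δ / 2) * finslerDist R1 q p with hε'def
        have hε'pos : 0 < ε' := by rw [hε'def]; linarith
        set σ := min (ε' / (L + δ / 2 + 1)) (c * ρ / 2) with hσdef
        have hσpos : 0 < σ :=
          lt_min (div_pos hε'pos (by linarith)) (by nlinarith [mul_pos hc hρpos])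
        have hsInflt : sInf {Lc | ∃ y y' : ℝ → EuclideanSpace ℝ (Fin d),
            IsACOn 0 1 y y' ∧ y 0 = q ∧ y 1 = p ∧
            Lc = ∫ s in (0:ℝ)..1, R1 (y s) (y' s)}
            < finslerDist R1 q p + σ := lt_add_of_pos_right _ hσpos
        obtain ⟨Lc, hLcmem, hLclt⟩ :=
          exists_lt_of_csInf_lt ⟨_, competitor_mem_line q p⟩ hsInflt
        obtain ⟨y, y', hy, h0, h1, rfl⟩ := hLcmem
        have hstay : ∀ s ∈ Set.Icc (0:ℝ) 1, dist (y s) q ≤ ρ := by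
          by_contra hcon2
          push_neg at hcon2
          obtain ⟨s₀, hs₀, hs₀'⟩ := hcon2
          have hexit := path_lb_exit hR hy h0 hc.le hρpos hρ1 hc1
            ⟨s₀, hs₀, by rw [← dist_eq_norm]; exact hs₀'⟩
          have hσ2 : σ ≤ c * ρ / 2 := min_le_right _ _
          linarith
        have hub := path_energy_ub hR hE t hy h0 hc hηpos hρpos hρ1 hL0 hkey hc1
          hgrad hclose' hstay
        have hcoef : L + (L + 1) * η / c = L + δ / 2 := by
          rw [hηdef]
          field_simp
        rw [hcoef, h1] at hub
        have h2 : (L + δ / 2) * (∫ s in (0:ℝ)..1, R1 (y s) (y' s))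
            ≤ (L + δ / 2) * (finslerDist R1 q p + σ) :=
          mul_le_mul_of_nonneg_left hLclt.le hcoefpos
        have hσle : σ ≤ ε' / (L + δ / 2 + 1) := min_le_left _ _
        have h4 : (L + δ / 2) * σ < ε' := by
          have h5 : (L + δ / 2) * σ ≤ (L + δ / 2) * (ε' / (L + δ / 2 + 1)) :=
            mul_le_mul_of_nonneg_left hσle hcoefpos
          have h6 : (L + δ / 2) * (ε' / (L + δ / 2 + 1))
              = ε' * ((L + δ / 2) / (L + δ / 2 + 1)) := by ring
          have h7 : (L + δ / 2) / (L + δ / 2 + 1) < 1 :=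
            (div_lt_one (by linarith)).2 (by linarith)
          nlinarith
        rw [hε'def] at h4
        nlinarith
      refine (div_le_iff₀ hd0).2 ?_
      refine max_le ?_ (mul_nonneg (by linarith) (dnn p))
      calc E t q - E t p ≤ (L + δ / 2) * finslerDist R1 q p := hest
        _ ≤ (L + δ) * finslerDist R1 q p :=
          mul_le_mul_of_nonneg_right (by linarith) (dnn p)
    -- conclude
    have hSbdd : BddBelow S := ⟨L, fun a ha => hS_lb a ha⟩
    have h1 : L ≤ sInf S := le_csInf ⟨L + 1, hS_mem 1 one_pos⟩ hS_lb
    have h3 : sInf S ≤ L := by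
      by_contra hcon
      push_neg at hcon
      have h2 := csInf_le hSbdd (hS_mem ((sInf S - L) / 2) (by linarith))
      linarith
    exact le_antisymm h1 h3
end

section
/- For ε > 0 define M_ε : [0,∞)³ → [0,∞] by M_ε(α,ν,ξ) = ν + (ε/(2α)) ν² + (α/(2ε)) ((ξ−1)⁺)² for α > 0, M_ε(0,0,ξ) = 0, and M_ε(0,ν,ξ) = +∞ for ν > 0. Define M₀ : [0,∞)³ → [0,∞] by M₀(0,ν,ξ) = ν + ν(ξ−1)⁺, and for α > 0: M₀(α,ν,ξ) = ν if ξ ≤ 1 and M₀(α,ν,ξ) = +∞ if ξ > 1. Then for every sequence ε_k ↓ 0 and every sequence (α_k,ν_k,ξ_k) → (α,ν,ξ) in [0,∞)³ one has M₀(α,ν,ξ) ≤ liminf_{k→∞} M_{ε_k}(α_k,ν_k,ξ_k). -/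
open MeasureTheory Filter Set Function
open scoped Topology ENNReal RealInnerProductSpace

lemma meps_bound1 {e a v x : ℝ} (he : 0 < e) (ha : 0 ≤ a) (hv : 0 ≤ v) :
    ENNReal.ofReal (v + v * max (x - 1) 0) ≤ MepsE e a v x := by
  unfold MepsE
  rcases eq_or_lt_of_le ha with h | h
  · rw [if_pos h.symm]
    by_cases hv0 : v = 0
    · simp [hv0]
    · simp [hv0]
  · rw [if_neg (ne_of_gt h)]
    apply ENNReal.ofReal_le_ofReal
    have hw : 0 ≤ max (x - 1) 0 := le_max_right _ _
    set w := max (x - 1) 0 with hwdef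
    have key : v * w ≤ e / (2 * a) * v ^ 2 + a / (2 * e) * w ^ 2 := by
      rw [div_mul_eq_mul_div, div_mul_eq_mul_div,
        div_add_div _ _ (by positivity) (by positivity), le_div_iff₀ (by positivity)]
      nlinarith [sq_nonneg (e * v - a * w)]
    linarith

lemma meps_bound2 {e a v x : ℝ} (he : 0 < e) (ha : 0 ≤ a) (hv : 0 ≤ v) :
    ENNReal.ofReal v ≤ MepsE e a v x := by
  unfold MepsE
  rcases eq_or_lt_of_le ha with h | h
  · rw [if_pos h.symm]
    by_cases hv0 : v = 0
    · simp [hv0]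
    · simp [hv0]
  · rw [if_neg (ne_of_gt h)]
    apply ENNReal.ofReal_le_ofReal
    have h1 : 0 ≤ e / (2 * a) * v ^ 2 := by positivity
    have h2 : 0 ≤ a / (2 * e) * (max (x - 1) 0) ^ 2 := by positivity
    linarith

theorem statement2 (eps : ℕ → ℝ) (heps : ∀ k, 0 < eps k) (hanti : StrictAnti eps)
    (heps0 : Filter.Tendsto eps Filter.atTop (𝓝 0))
    (a v x : ℕ → ℝ) (α ν ξ : ℝ)
    (ha : ∀ k, 0 ≤ a k) (hv : ∀ k, 0 ≤ v k) (hx : ∀ k, 0 ≤ x k)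
    (hα : 0 ≤ α) (hν : 0 ≤ ν) (hξ : 0 ≤ ξ)
    (hca : Filter.Tendsto a Filter.atTop (𝓝 α))
    (hcv : Filter.Tendsto v Filter.atTop (𝓝 ν))
    (hcx : Filter.Tendsto x Filter.atTop (𝓝 ξ)) :
    M0E α ν ξ ≤ Filter.liminf (fun k => MepsE (eps k) (a k) (v k) (x k)) Filter.atTop := by
  
  by_cases ha0 : α = 0
  · -- Case α = 0
    have hb : ∀ k, ENNReal.ofReal (v k + v k * max (x k - 1) 0)
        ≤ MepsE (eps k) (a k) (v k) (x k) := fun k => meps_bound1 (heps k) (ha k) (hv k)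
    have htR : Filter.Tendsto (fun k => v k + v k * max (x k - 1) 0) Filter.atTop
        (𝓝 (ν + ν * max (ξ - 1) 0)) := by
      exact hcv.add (hcv.mul (((hcx.sub tendsto_const_nhds).max tendsto_const_nhds)))
    have ht : Filter.Tendsto (fun k => ENNReal.ofReal (v k + v k * max (x k - 1) 0))
        Filter.atTop (𝓝 (ENNReal.ofReal (ν + ν * max (ξ - 1) 0))) :=
      (ENNReal.continuous_ofReal.tendsto _).comp htR
    have hM0 : M0E α ν ξ = ENNReal.ofReal (ν + ν * max (ξ - 1) 0) := by
      simp [M0E, ha0]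
    rw [hM0, ← ht.liminf_eq]
    exact Filter.liminf_le_liminf (Filter.Eventually.of_forall hb)
  · by_cases hξ1 : ξ ≤ 1
    · -- Case α > 0, ξ ≤ 1
      have hb : ∀ k, ENNReal.ofReal (v k) ≤ MepsE (eps k) (a k) (v k) (x k) :=
        fun k => meps_bound2 (heps k) (ha k) (hv k)
      have ht : Filter.Tendsto (fun k => ENNReal.ofReal (v k)) Filter.atTop
          (𝓝 (ENNReal.ofReal ν)) := (ENNReal.continuous_ofReal.tendsto _).comp hcv
      have hM0 : M0E α ν ξ = ENNReal.ofReal ν := by simp [M0E, ha0, hξ1]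
      rw [hM0, ← ht.liminf_eq]
      exact Filter.liminf_le_liminf (Filter.Eventually.of_forall hb)
    · -- Case α > 0, ξ > 1
      push_neg at hξ1
      have hαpos : 0 < α := lt_of_le_of_ne hα (Ne.symm ha0)
      set c : ℝ := α / 2 * ((ξ - 1) / 2) ^ 2 / 2 with hc
      have hcpos : 0 < c := by
        have h1 : 0 < ξ - 1 := by linarith
        rw [hc]; positivity
      -- eventually, a k ≥ α/2, max (x k - 1) 0 ≥ (ξ-1)/2
      have hea : ∀ᶠ k in Filter.atTop, α / 2 < a k := by
        have := hca.eventually (eventually_gt_nhds (by linarith : α / 2 < α))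
        exact this
      have hex : ∀ᶠ k in Filter.atTop, (ξ - 1) / 2 < x k - 1 := by
        have := hcx.eventually (eventually_gt_nhds (by linarith : (ξ + 1) / 2 < ξ))
        filter_upwards [this] with k hk
        linarith
      have hb : ∀ᶠ k in Filter.atTop,
          ENNReal.ofReal (c / eps k) ≤ MepsE (eps k) (a k) (v k) (x k) := by
        filter_upwards [hea, hex] with k hk1 hk2
        have hak : 0 < a k := lt_trans (by linarith) hk1
        have hek := heps k
        rw [MepsE, if_neg (ne_of_gt hak)]
        apply ENNReal.ofReal_le_ofReal
        have hw : (ξ - 1) / 2 ≤ max (x k - 1) 0 := le_trans (le_of_lt hk2) (le_max_left _ _)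
        have hwpos : 0 < (ξ - 1) / 2 := by linarith
        have h1 : c / eps k ≤ a k / (2 * eps k) * (max (x k - 1) 0) ^ 2 := by
          rw [hc, div_le_iff₀ hek] at *
          have : α / 2 * ((ξ - 1) / 2) ^ 2 ≤ a k * (max (x k - 1) 0) ^ 2 := by
            apply mul_le_mul (le_of_lt hk1) _ (by positivity) (le_of_lt hak)
            exact pow_le_pow_left₀ (le_of_lt hwpos) hw 2
          calc α / 2 * ((ξ - 1) / 2) ^ 2 / 2
              ≤ a k * (max (x k - 1) 0) ^ 2 / 2 := by linarith
            _ = a k / (2 * eps k) * (max (x k - 1) 0) ^ 2 * eps k := by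
                field_simp
        have h2 : 0 ≤ eps k / (2 * a k) * (v k) ^ 2 := by positivity
        have h3 := hv k
        linarith
      have htc : Filter.Tendsto (fun k => ENNReal.ofReal (c / eps k)) Filter.atTop (𝓝 ⊤) := by
        have h1 : Filter.Tendsto eps Filter.atTop (𝓝[>] 0) := by
          apply tendsto_nhdsWithin_of_tendsto_nhds_of_eventually_within _ heps0
          exact Filter.Eventually.of_forall fun k => heps k
        have h2 : Filter.Tendsto (fun k => (eps k)⁻¹) Filter.atTop Filter.atTop :=
          tendsto_inv_nhdsGT_zero.comp h1
        have h3 : Filter.Tendsto (fun k => c / eps k) Filter.atTop Filter.atTop := by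
          simpa [div_eq_mul_inv] using h2.const_mul_atTop hcpos
        exact ENNReal.tendsto_ofReal_atTop.comp h3
      have hM0 : M0E α ν ξ = ⊤ := by simp [M0E, ha0, not_le.mpr hξ1]
      rw [hM0, ← htc.liminf_eq]
      exact Filter.liminf_le_liminf hb
end

section
/- For ε > 0 define M_ε : [0,∞)³ → [0,∞] by M_ε(α,ν,ξ) = ν + (ε/(2α)) ν² + (α/(2ε)) ((ξ−1)⁺)² for α > 0, M_ε(0,0,ξ) = 0, and M_ε(0,ν,ξ) = +∞ for ν > 0. Define M₀ : [0,∞)³ → [0,∞] by M₀(0,ν,ξ) = ν + ν(ξ−1)⁺, and for α > 0: M₀(α,ν,ξ) = ν if ξ ≤ 1 and M₀(α,ν,ξ) = +∞ if ξ > 1. Then for every (α,ν,ξ) ∈ [0,∞)³ and every sequence ε_k ↓ 0 there exists a sequence (α_k,ν_k,ξ_k) → (α,ν,ξ) in [0,∞)³ such that limsup_{k→∞} M_{ε_k}(α_k,ν_k,ξ_k) ≤ M₀(α,ν,ξ). -/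
open MeasureTheory Filter Set Function
open scoped Topology ENNReal RealInnerProductSpace

theorem statement3 (α ν ξ : ℝ) (hα : 0 ≤ α) (hν : 0 ≤ ν) (hξ : 0 ≤ ξ)
    (eps : ℕ → ℝ) (heps : ∀ k, 0 < eps k) (hanti : StrictAnti eps)
    (heps0 : Filter.Tendsto eps Filter.atTop (𝓝 0)) :
    ∃ a v x : ℕ → ℝ,
      (∀ k, 0 ≤ a k ∧ 0 ≤ v k ∧ 0 ≤ x k) ∧
      Filter.Tendsto a Filter.atTop (𝓝 α) ∧
      Filter.Tendsto v Filter.atTop (𝓝 ν) ∧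
      Filter.Tendsto x Filter.atTop (𝓝 ξ) ∧
      Filter.limsup (fun k => MepsE (eps k) (a k) (v k) (x k)) Filter.atTop
        ≤ M0E α ν ξ := by

  have hmdef : max (ξ - 1) 0 = max (ξ - 1) 0 := rfl
  by_cases hα0 : α = 0
  · subst hα0
    by_cases hν0 : ν = 0
    · subst hν0
      refine ⟨fun _ => 0, fun _ => 0, fun _ => ξ,
        fun k => ⟨le_refl _, le_refl _, hξ⟩,
        tendsto_const_nhds, tendsto_const_nhds, tendsto_const_nhds, ?_⟩
      have h : (fun k => MepsE (eps k) 0 0 ξ) = fun _ => (0 : ℝ≥0∞) :=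
        funext fun k => by simp [MepsE]
      rw [h, Filter.limsup_const]
      exact zero_le
    · have hνpos : 0 < ν := lt_of_le_of_ne hν (Ne.symm hν0)
      by_cases hξ1 : ξ ≤ 1
      · -- m = 0, use a_k = sqrt (eps k)
        have hm : max (ξ - 1) 0 = 0 := max_eq_right (by linarith)
        refine ⟨fun k => Real.sqrt (eps k), fun _ => ν, fun _ => ξ,
          fun k => ⟨Real.sqrt_nonneg _, hν, hξ⟩, ?_, tendsto_const_nhds,
          tendsto_const_nhds, ?_⟩
        · simpa using heps0.sqrt
        · have h : (fun k => MepsE (eps k) (Real.sqrt (eps k)) ν ξ)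
              = fun k => ENNReal.ofReal (ν + Real.sqrt (eps k) / 2 * ν ^ 2) := by
            funext k
            have hsp : 0 < Real.sqrt (eps k) := Real.sqrt_pos.2 (heps k)
            have hse : Real.sqrt (eps k) * Real.sqrt (eps k) = eps k :=
              Real.mul_self_sqrt (heps k).le
            have h2 : eps k / (2 * Real.sqrt (eps k)) = Real.sqrt (eps k) / 2 := by
              rw [div_eq_div_iff (by positivity) (by norm_num : (2:ℝ) ≠ 0)]
              nlinarith [hse]
            have key : ν + eps k / (2 * Real.sqrt (eps k)) * ν ^ 2
                + Real.sqrt (eps k) / (2 * eps k) * (max (ξ - 1) 0) ^ 2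
                = ν + Real.sqrt (eps k) / 2 * ν ^ 2 := by
              rw [hm, h2]; ring
            simp only [MepsE, if_neg hsp.ne', key]
          rw [h]
          have htend : Filter.Tendsto
              (fun k => ENNReal.ofReal (ν + Real.sqrt (eps k) / 2 * ν ^ 2))
              Filter.atTop (𝓝 (ENNReal.ofReal ν)) := by
            apply ENNReal.tendsto_ofReal
            have : Filter.Tendsto (fun k => Real.sqrt (eps k) / 2 * ν ^ 2)
                Filter.atTop (𝓝 0) := by
              simpa using (heps0.sqrt.div_const 2).mul_const (ν ^ 2)
            simpa using tendsto_const_nhds.add this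
          rw [htend.limsup_eq]
          simp [M0E, hm]
      · -- m > 0, use a_k = eps k * (ν / m)
        push_neg at hξ1
        set m : ℝ := max (ξ - 1) 0 with hm
        have hmpos : 0 < m := lt_max_of_lt_left (by linarith)
        refine ⟨fun k => eps k * (ν / m), fun _ => ν, fun _ => ξ,
          fun k => ⟨(mul_pos (heps k) (div_pos hνpos hmpos)).le, hν, hξ⟩,
          ?_, tendsto_const_nhds,
          tendsto_const_nhds, ?_⟩
        · simpa using heps0.mul_const (ν / m)
        · have h : (fun k => MepsE (eps k) (eps k * (ν / m)) ν ξ)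
              = fun _ => ENNReal.ofReal (ν + ν * m) := by
            funext k
            have hak : eps k * (ν / m) ≠ 0 :=
              (mul_pos (heps k) (div_pos hνpos hmpos)).ne'
            have he := (heps k).ne'
            have hmne := hmpos.ne'
            have key : ν + eps k / (2 * (eps k * (ν / m))) * ν ^ 2
                + eps k * (ν / m) / (2 * eps k) * (max (ξ - 1) 0) ^ 2
                = ν + ν * m := by
              rw [← hm]
              field_simp
              ring
            simp only [MepsE, if_neg hak, key]
          rw [h, Filter.limsup_const]
          simp [M0E, ← hm]
  · have hαpos : 0 < α := lt_of_le_of_ne hα (Ne.symm hα0)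
    by_cases hξ1 : ξ ≤ 1
    · have hm : max (ξ - 1) 0 = 0 := max_eq_right (by linarith)
      refine ⟨fun _ => α, fun _ => ν, fun _ => ξ,
        fun k => ⟨hα, hν, hξ⟩, tendsto_const_nhds, tendsto_const_nhds,
        tendsto_const_nhds, ?_⟩
      have h : (fun k => MepsE (eps k) α ν ξ)
          = fun k => ENNReal.ofReal (ν + eps k / (2 * α) * ν ^ 2) := by
        funext k
        simp only [MepsE, hα0, if_neg, hm]
        norm_num
      rw [h]
      have htend : Filter.Tendsto
          (fun k => ENNReal.ofReal (ν + eps k / (2 * α) * ν ^ 2))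
          Filter.atTop (𝓝 (ENNReal.ofReal ν)) := by
        apply ENNReal.tendsto_ofReal
        have : Filter.Tendsto (fun k => eps k / (2 * α) * ν ^ 2)
            Filter.atTop (𝓝 0) := by
          simpa using (heps0.div_const (2 * α)).mul_const (ν ^ 2)
        simpa using tendsto_const_nhds.add this
      rw [htend.limsup_eq]
      simp [M0E, hα0, hξ1]
    · refine ⟨fun _ => α, fun _ => ν, fun _ => ξ,
        fun k => ⟨hα, hν, hξ⟩, tendsto_const_nhds, tendsto_const_nhds,
        tendsto_const_nhds, ?_⟩
      have : M0E α ν ξ = ⊤ := by simp [M0E, hα0, hξ1]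
      rw [this]
      exact le_top
end

section
/- For ε > 0 define M_ε : [0,∞)³ → [0,∞] by M_ε(α,ν,ξ) = ν + (ε/(2α)) ν² + (α/(2ε)) ((ξ−1)⁺)² for α > 0, M_ε(0,0,ξ) = 0, and M_ε(0,ν,ξ) = +∞ for ν > 0. Define M₀ : [0,∞)³ → [0,∞] by M₀(0,ν,ξ) = ν + ν(ξ−1)⁺, and for α > 0: M₀(α,ν,ξ) = ν if ξ ≤ 1 and M₀(α,ν,ξ) = +∞ if ξ > 1. Let s₀ < s₁, let ε_k ↓ 0, and let α_k, ν_k, ξ_k, α̂, ν̂, ξ̂ : (s₀,s₁) → [0,∞) be measurable with (α_k, ν_k) ⇀ (α̂, ν̂) weakly in L¹((s₀,s₁); ℝ²) and liminf_{k→∞} ξ_k(s) ≥ ξ̂(s) for a.e. s ∈ (s₀,s₁). Then ∫_{s₀}^{s₁} M₀(α̂(s), ν̂(s), ξ̂(s)) ds ≤ liminf_{k→∞} ∫_{s₀}^{s₁} M_{ε_k}(α_k(s), ν_k(s), ξ_k(s)) ds. -/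
open MeasureTheory Filter Set Function
open scoped Topology ENNReal RealInnerProductSpace

private lemma vmax_eq (vv xx : ℝ) : vv * max xx 1 = vv + vv * max (xx - 1) 0 := by
  rcases le_total xx 1 with h | h
  · rw [max_eq_right h, max_eq_right (by linarith : xx - 1 ≤ 0)]; ring
  · rw [max_eq_left h, max_eq_left (by linarith : (0:ℝ) ≤ xx - 1)]; ring

private lemma ptwise1 {ε aa vv xx : ℝ} (hε : 0 < ε) (ha : 0 ≤ aa) (hv : 0 ≤ vv) :
    ENNReal.ofReal (vv * max xx 1) ≤ MepsE ε aa vv xx := by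
  unfold MepsE
  rcases eq_or_lt_of_le ha with h0 | hpos
  · rw [if_pos h0.symm]
    by_cases hv0 : vv = 0
    · simp [hv0]
    · simp [hv0]
  · rw [if_neg (ne_of_gt hpos)]
    apply ENNReal.ofReal_le_ofReal
    have hm : 0 ≤ max (xx - 1) 0 := le_max_right _ _
    rw [vmax_eq]
    have h1 : vv * max (xx-1) 0 ≤ ε / (2*aa) * vv^2 + aa/(2*ε) * (max (xx-1) 0)^2 := by
      rw [div_mul_eq_mul_div, div_mul_eq_mul_div,
        div_add_div _ _ (by positivity) (by positivity), le_div_iff₀ (by positivity)]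
      nlinarith [sq_nonneg (ε * vv - aa * max (xx-1) 0), mul_pos hε hpos]
    linarith

private lemma ptwise2 {ε aa vv xx δ : ℝ} (hε : 0 < ε) (ha : 0 ≤ aa) (hv : 0 ≤ vv)
    (hδ : 0 < δ) (hx : 1 + δ/2 ≤ xx) :
    ENNReal.ofReal (δ^2/8/ε * aa) ≤ MepsE ε aa vv xx := by
  unfold MepsE
  rcases eq_or_lt_of_le ha with h0 | hpos
  · rw [if_pos h0.symm, ← h0]
    simp
  · rw [if_neg (ne_of_gt hpos)]
    apply ENNReal.ofReal_le_ofReal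
    have hm : δ/2 ≤ max (xx - 1) 0 := le_max_of_le_left (by linarith)
    have h2 : aa/(2*ε) * (δ/2)^2 ≤ aa/(2*ε) * (max (xx-1) 0)^2 := by
      apply mul_le_mul_of_nonneg_left _ (by positivity)
      exact pow_le_pow_left₀ (by positivity) hm 2
    have h3 : δ^2/8/ε * aa = aa/(2*ε) * (δ/2)^2 := by ring
    have h4 : (0:ℝ) ≤ ε / (2*aa) * vv^2 := by positivity
    linarith


theorem statement4 (s₀ s₁ : ℝ) (hs : s₀ < s₁)
    (eps : ℕ → ℝ) (heps : ∀ k, 0 < eps k) (hanti : StrictAnti eps)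
    (heps0 : Filter.Tendsto eps Filter.atTop (𝓝 0))
    (a v x : ℕ → ℝ → ℝ) (ah vh xh : ℝ → ℝ)
    (hmeas : ∀ k, Measurable (a k) ∧ Measurable (v k) ∧ Measurable (x k))
    (hmeash : Measurable ah ∧ Measurable vh ∧ Measurable xh)
    (hnn : ∀ k, ∀ s ∈ Set.Ioo s₀ s₁, 0 ≤ a k s ∧ 0 ≤ v k s ∧ 0 ≤ x k s)
    (hnnh : ∀ s ∈ Set.Ioo s₀ s₁, 0 ≤ ah s ∧ 0 ≤ vh s ∧ 0 ≤ xh s)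
    (hL1 : ∀ k, IntegrableOn (a k) (Set.Ioo s₀ s₁) ∧ IntegrableOn (v k) (Set.Ioo s₀ s₁))
    (hL1h : IntegrableOn ah (Set.Ioo s₀ s₁) ∧ IntegrableOn vh (Set.Ioo s₀ s₁))
    (hweak : ∀ φ : ℝ → ℝ, Measurable φ → (∃ C, ∀ s, |φ s| ≤ C) →
      Filter.Tendsto (fun k => ∫ s in Set.Ioo s₀ s₁, a k s * φ s)
          Filter.atTop (𝓝 (∫ s in Set.Ioo s₀ s₁, ah s * φ s)) ∧
      Filter.Tendsto (fun k => ∫ s in Set.Ioo s₀ s₁, v k s * φ s)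
          Filter.atTop (𝓝 (∫ s in Set.Ioo s₀ s₁, vh s * φ s)))
    (hliminf : ∀ᵐ s ∂volume, s ∈ Set.Ioo s₀ s₁ →
      ((xh s : ℝ) : EReal) ≤ Filter.liminf (fun k => ((x k s : ℝ) : EReal)) Filter.atTop) :
    ∫⁻ s in Set.Ioo s₀ s₁, M0E (ah s) (vh s) (xh s)
      ≤ Filter.liminf
          (fun k => ∫⁻ s in Set.Ioo s₀ s₁, MepsE (eps k) (a k s) (v k s) (x k s))
          Filter.atTop := by
  obtain ⟨hma, hmv, hmx⟩ := hmeash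
  set I : Set ℝ := Set.Ioo s₀ s₁ with hIdef
  have hImeas : MeasurableSet I := measurableSet_Ioo
  set L := Filter.liminf
      (fun k => ∫⁻ s in I, MepsE (eps k) (a k s) (v k s) (x k s)) Filter.atTop with hLdef
  by_cases hnull : volume {s | s ∈ I ∧ 0 < ah s ∧ 1 < xh s} = 0
  · -- FINITE CASE
    -- Step A : pointwise lower bound for MepsE
    have stepA : ∀ k, (∫⁻ s in I, ENNReal.ofReal (v k s * max (x k s) 1))
        ≤ ∫⁻ s in I, MepsE (eps k) (a k s) (v k s) (x k s) := by
      intro k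
      refine lintegral_mono_ae ((ae_restrict_iff' hImeas).2 (Filter.Eventually.of_forall ?_))
      intro s hsI
      exact ptwise1 (heps k) (hnn k s hsI).1 (hnn k s hsI).2.1
    set L' := Filter.liminf
        (fun k => ∫⁻ s in I, ENNReal.ofReal (v k s * max (x k s) 1)) Filter.atTop with hL'def
    have hL'L : L' ≤ L := Filter.liminf_le_liminf (Filter.Eventually.of_forall stepA)
    -- Step 0 : M0E ≤ ofReal (vh * max xh 1) a.e. on I
    have step0 : ∫⁻ s in I, M0E (ah s) (vh s) (xh s)
        ≤ ∫⁻ s in I, ENNReal.ofReal (vh s * max (xh s) 1) := by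
      refine lintegral_mono_ae ((ae_restrict_iff' hImeas).2 ?_)
      filter_upwards [measure_eq_zero_iff_ae_notMem.1 hnull] with s hbad hsI
      obtain ⟨hva, hvv, hvx⟩ := hnnh s hsI
      unfold M0E
      by_cases hah : ah s = 0
      · rw [if_pos hah]
        exact le_of_eq (by rw [vmax_eq])
      · rw [if_neg hah]
        have hx1 : xh s ≤ 1 := by
          by_contra hgt
          exact hbad ⟨hsI, lt_of_le_of_ne hva (Ne.symm hah), lt_of_not_ge hgt⟩
        rw [if_pos hx1]
        exact ENNReal.ofReal_le_ofReal (le_mul_of_one_le_right hvv (le_max_right _ _))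
    -- Step C : lower semicontinuity
    have key : ∀ (m : ℕ) (η : ℝ), 0 < η → η < 1 →
        ∫⁻ s in I, ENNReal.ofReal (vh s * (min (max (xh s) 1) (m+1) - η)) ≤ L' := by
      intro m η hη hη1
      set w : ℝ → ℝ := fun s => min (max (xh s) 1) (m+1) with hwdef
      have hw1 : ∀ s, 1 ≤ w s := fun s =>
        le_min (le_max_right _ _) (by push_cast; linarith [Nat.cast_nonneg (α := ℝ) m])
      have hwm : ∀ s, w s ≤ m+1 := fun s => min_le_right _ _
      have hwmeas : Measurable w := (hmx.max measurable_const).min measurable_const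
      set B : ℕ → Set ℝ := fun N =>
        ⋂ (k : ℕ), ⋂ (_ : N ≤ k), {s | w s - η ≤ min (max (x k s) 1) (m+1)} with hBdef
      have hBmeas : ∀ N, MeasurableSet (B N) := fun N =>
        MeasurableSet.iInter fun k => MeasurableSet.iInter fun _ =>
          measurableSet_le (hwmeas.sub measurable_const)
            (((hmeas k).2.2.max measurable_const).min measurable_const)
      have hBmono : Monotone B := by
        intro N M hNM s hsN
        simp only [hBdef, Set.mem_iInter, Set.mem_setOf_eq] at hsN ⊢
        intro k hk
        exact hsN k (hNM.trans hk)
      have hBmem : ∀ {N k s}, N ≤ k → s ∈ B N → w s - η ≤ min (max (x k s) 1) (m+1) := by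
        intro N k s hk hsB
        simp only [hBdef, Set.mem_iInter, Set.mem_setOf_eq] at hsB
        exact hsB k hk
      have hcover : ∀ᵐ s ∂volume, s ∈ I → s ∈ ⋃ N, B N := by
        filter_upwards [hliminf] with s hsl hsI
        by_cases hc : w s - η ≤ 1
        · refine Set.mem_iUnion.2 ⟨0, ?_⟩
          simp only [hBdef, Set.mem_iInter, Set.mem_setOf_eq]
          intro k _
          refine hc.trans (le_min (le_max_right _ _) ?_)
          push_cast; linarith [Nat.cast_nonneg (α := ℝ) m]
        · push_neg at hc
          have hxh1 : 1 < xh s := by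
            by_contra h
            push_neg at h
            have : w s ≤ 1 := min_le_of_left_le (by rw [max_eq_right h])
            linarith
          have hwle : w s ≤ xh s := (min_le_left _ _).trans (le_of_eq (max_eq_left hxh1.le))
          have hlt : ((w s - η : ℝ) : EReal)
              < Filter.liminf (fun k => ((x k s : ℝ) : EReal)) Filter.atTop := by
            refine lt_of_lt_of_le ?_ (hsl hsI)
            exact_mod_cast (by linarith : w s - η < xh s)
          obtain ⟨N, hN⟩ := Filter.eventually_atTop.1 (Filter.eventually_lt_of_lt_liminf hlt)
          refine Set.mem_iUnion.2 ⟨N, ?_⟩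
          simp only [hBdef, Set.mem_iInter, Set.mem_setOf_eq]
          intro k hk
          have hxk : w s - η < x k s := by exact_mod_cast hN k hk
          refine le_min (le_max_of_le_left hxk.le) ?_
          linarith [hwm s]
      -- per N bound
      have keyN : ∀ N, ∫⁻ s in I ∩ B N, ENNReal.ofReal (vh s * (w s - η)) ≤ L' := by
        intro N
        have hIB : MeasurableSet (I ∩ B N) := hImeas.inter (hBmeas N)
        have hsubIB : I ∩ B N ⊆ I := Set.inter_subset_left
        set φ : ℝ → ℝ := (B N).indicator (fun s => w s - η) with hφdef
        have hφm : Measurable φ := (hwmeas.sub measurable_const).indicator (hBmeas N)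
        have hφb : ∃ C, ∀ s, |φ s| ≤ C := by
          refine ⟨m+1, fun s => ?_⟩
          by_cases h : s ∈ B N
          · rw [hφdef, Set.indicator_of_mem h, abs_le]
            constructor
            · have := hw1 s; push_cast; nlinarith [Nat.cast_nonneg (α := ℝ) m]
            · linarith [hwm s]
          · rw [hφdef, Set.indicator_of_notMem h]
            simp only [abs_zero]
            positivity
        have hrw : ∀ g : ℝ → ℝ, (∫ s in I, g s * φ s) = ∫ s in I ∩ B N, g s * (w s - η) := by
          intro g
          have hfeq : (fun s => g s * φ s) = (B N).indicator (fun s => g s * (w s - η)) := by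
            funext s
            by_cases h : s ∈ B N <;> simp [hφdef, h]
          rw [hfeq, integral_indicator (hBmeas N), Measure.restrict_restrict (hBmeas N),
            Set.inter_comm]
        have hw2 : Tendsto (fun k => ∫ s in I ∩ B N, v k s * (w s - η)) atTop
            (𝓝 (∫ s in I ∩ B N, vh s * (w s - η))) := by
          have := (hweak φ hφm hφb).2
          rw [hrw vh] at this
          exact this.congr fun k => hrw (v k)
        have hwnn : ∀ s, 0 ≤ w s - η := fun s => by linarith [hw1 s]
        have hconv : ∀ g : ℝ → ℝ, IntegrableOn g I → (∀ s ∈ I, 0 ≤ g s) →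
            ENNReal.ofReal (∫ s in I ∩ B N, g s * (w s - η))
              = ∫⁻ s in I ∩ B N, ENNReal.ofReal (g s * (w s - η)) := by
          intro g hg hgnn
          refine MeasureTheory.ofReal_integral_eq_lintegral_ofReal ?_ ?_
          · have hint : Integrable (fun s => (w s - η) * g s)
                (volume.restrict (I ∩ B N)) :=
              Integrable.bdd_mul (c := (m:ℝ)+1) (hg.mono_set hsubIB)
                ((hwmeas.sub measurable_const).aestronglyMeasurable)
                (Filter.Eventually.of_forall fun s => by
                  rw [Real.norm_eq_abs, abs_of_nonneg (hwnn s)]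
                  linarith [hwm s])
            exact hint.congr (Filter.Eventually.of_forall fun s => mul_comm _ _)
          · refine (ae_restrict_iff' hIB).2 (Filter.Eventually.of_forall fun s hsIB =>
              mul_nonneg (hgnn s hsIB.1) (hwnn s))
        have hlim : Tendsto (fun k => ∫⁻ s in I ∩ B N, ENNReal.ofReal (v k s * (w s - η)))
            atTop (𝓝 (∫⁻ s in I ∩ B N, ENNReal.ofReal (vh s * (w s - η)))) := by
          have hc := (ENNReal.continuous_ofReal.tendsto _).comp hw2
          rw [hconv vh hL1h.2 (fun s hsI => (hnnh s hsI).2.1)] at hc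
          refine hc.congr fun k => ?_
          exact hconv (v k) (hL1 k).2 (fun s hsI => (hnn k s hsI).2.1)
        have hev : ∀ᶠ k in atTop, ∫⁻ s in I ∩ B N, ENNReal.ofReal (v k s * (w s - η))
            ≤ ∫⁻ s in I, ENNReal.ofReal (v k s * max (x k s) 1) := by
          refine Filter.eventually_atTop.2 ⟨N, fun k hk => ?_⟩
          calc ∫⁻ s in I ∩ B N, ENNReal.ofReal (v k s * (w s - η))
              ≤ ∫⁻ s in I ∩ B N, ENNReal.ofReal (v k s * max (x k s) 1) := by
                refine lintegral_mono_ae ((ae_restrict_iff' hIB).2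
                  (Filter.Eventually.of_forall fun s hsIB => ?_))
                apply ENNReal.ofReal_le_ofReal
                refine mul_le_mul_of_nonneg_left ?_ (hnn k s hsIB.1).2.1
                exact (hBmem hk hsIB.2).trans (min_le_left _ _)
            _ ≤ ∫⁻ s in I, ENNReal.ofReal (v k s * max (x k s) 1) :=
                lintegral_mono' (Measure.restrict_mono hsubIB le_rfl) le_rfl
        calc ∫⁻ s in I ∩ B N, ENNReal.ofReal (vh s * (w s - η))
            = Filter.liminf (fun k => ∫⁻ s in I ∩ B N, ENNReal.ofReal (v k s * (w s - η)))
                Filter.atTop := hlim.liminf_eq.symm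
          _ ≤ L' := Filter.liminf_le_liminf hev
      -- MCT in N
      set g : ℝ → ℝ≥0∞ := fun s => ENNReal.ofReal (vh s * (w s - η)) with hgdef
      have hgm : Measurable g :=
        (hmv.mul (hwmeas.sub measurable_const)).ennreal_ofReal
      set F : ℕ → ℝ → ℝ≥0∞ := fun N => (I ∩ B N).indicator g with hFdef
      have hFmeas : ∀ N, Measurable (F N) := fun N =>
        hgm.indicator (hImeas.inter (hBmeas N))
      have hFmono : Monotone F := by
        intro N M hNM
        exact Set.indicator_le_indicator_of_subset
          (Set.inter_subset_inter_right _ (hBmono hNM)) (fun s => zero_le)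
      calc ∫⁻ s in I, g s = ∫⁻ s, I.indicator g s := (lintegral_indicator hImeas g).symm
        _ ≤ ∫⁻ s, ⨆ N, F N s := by
            refine lintegral_mono_ae ?_
            filter_upwards [hcover] with s hcov
            by_cases hsI : s ∈ I
            · obtain ⟨N, hN⟩ := Set.mem_iUnion.1 (hcov hsI)
              rw [Set.indicator_of_mem hsI]
              refine le_trans (le_of_eq ?_) (le_iSup (fun N => F N s) N)
              exact (Set.indicator_of_mem (show s ∈ I ∩ B N from ⟨hsI, hN⟩) g).symm
            · rw [Set.indicator_of_notMem hsI]
              exact zero_le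
        _ = ⨆ N, ∫⁻ s, F N s := lintegral_iSup hFmeas hFmono
        _ ≤ L' := by
            refine iSup_le fun N => ?_
            rw [hFdef]
            simp only
            rw [lintegral_indicator (hImeas.inter (hBmeas N)) g]
            exact keyN N
    -- remove η
    have keyM : ∀ m : ℕ,
        ∫⁻ s in I, ENNReal.ofReal (vh s * min (max (xh s) 1) (m+1)) ≤ L' := by
      intro m
      have hCfin : ∫⁻ s in I, ENNReal.ofReal (vh s) < ⊤ := hL1h.2.lintegral_lt_top
      refine ENNReal.le_of_forall_pos_le_add fun ε hε hLtop => ?_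
      set Ct : ℝ := (∫⁻ s in I, ENNReal.ofReal (vh s)).toReal with hCtdef
      have hCt0 : 0 ≤ Ct := ENNReal.toReal_nonneg
      set η : ℝ := min (1/2) ((ε : ℝ) / (Ct + 1)) with hηdef
      have hη : 0 < η := lt_min (by norm_num) (by positivity)
      have hη1 : η < 1 := lt_of_le_of_lt (min_le_left _ _) (by norm_num)
      have hsplit : ∫⁻ s in I, ENNReal.ofReal (vh s * min (max (xh s) 1) (m+1))
          ≤ (∫⁻ s in I, ENNReal.ofReal (vh s * (min (max (xh s) 1) (m+1) - η)))
            + ∫⁻ s in I, ENNReal.ofReal (vh s * η) := by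
        rw [← lintegral_add_left (f := fun s => ENNReal.ofReal (vh s * (min (max (xh s) 1) ((m:ℝ)+1) - η)))
          ((hmv.mul (((hmx.max measurable_const).min measurable_const).sub
            measurable_const)).ennreal_ofReal)]
        refine lintegral_mono_ae ((ae_restrict_iff' hImeas).2
          (Filter.Eventually.of_forall fun s hsI => ?_))
        have hvnn := (hnnh s hsI).2.1
        have hwge : 1 ≤ min (max (xh s) 1) ((m:ℝ)+1) :=
          le_min (le_max_right _ _) (by push_cast; linarith [Nat.cast_nonneg (α := ℝ) m])
        rw [← ENNReal.ofReal_add (by nlinarith) (by positivity)]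
        apply ENNReal.ofReal_le_ofReal
        nlinarith
      have hconst : ∫⁻ s in I, ENNReal.ofReal (vh s * η)
          ≤ ENNReal.ofReal η * ∫⁻ s in I, ENNReal.ofReal (vh s) := by
        rw [← lintegral_const_mul _ (hmv.ennreal_ofReal)]
        refine lintegral_mono fun s => ?_
        rw [← ENNReal.ofReal_mul hη.le, mul_comm]
      have hfinal : ENNReal.ofReal η * ∫⁻ s in I, ENNReal.ofReal (vh s) ≤ (ε : ℝ≥0∞) := by
        have h1 : (∫⁻ s in I, ENNReal.ofReal (vh s)) = ENNReal.ofReal Ct := by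
          rw [hCtdef, ENNReal.ofReal_toReal hCfin.ne]
        rw [h1, ← ENNReal.ofReal_mul hη.le]
        rw [← ENNReal.ofReal_coe_nnreal]
        apply ENNReal.ofReal_le_ofReal
        have hηle : η ≤ (ε : ℝ) / (Ct + 1) := min_le_right _ _
        have : η * Ct ≤ (ε : ℝ) / (Ct + 1) * Ct :=
          mul_le_mul_of_nonneg_right hηle hCt0
        refine this.trans ?_
        rw [div_mul_eq_mul_div, div_le_iff₀ (by positivity)]
        nlinarith [ε.coe_nonneg]
      calc ∫⁻ s in I, ENNReal.ofReal (vh s * min (max (xh s) 1) (m+1))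
          ≤ (∫⁻ s in I, ENNReal.ofReal (vh s * (min (max (xh s) 1) (m+1) - η)))
            + ∫⁻ s in I, ENNReal.ofReal (vh s * η) := hsplit
        _ ≤ L' + (ε : ℝ≥0∞) := add_le_add (key m η hη hη1) (hconst.trans hfinal)
    -- m → ∞
    have hsup : ∫⁻ s in I, ENNReal.ofReal (vh s * max (xh s) 1) ≤ L' := by
      set G : ℕ → ℝ → ℝ≥0∞ :=
        fun m s => ENNReal.ofReal (max (vh s) 0 * min (max (xh s) 1) (m+1)) with hGdef
      have hGmeas : ∀ m, Measurable (G m) := fun m =>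
        ((hmv.max measurable_const).mul
          ((hmx.max measurable_const).min measurable_const)).ennreal_ofReal
      have hGmono : Monotone G := by
        intro m m' hmm s
        apply ENNReal.ofReal_le_ofReal
        refine mul_le_mul_of_nonneg_left ?_ (le_max_right _ _)
        refine min_le_min le_rfl ?_
        push_cast
        exact_mod_cast add_le_add (Nat.cast_le.2 hmm) le_rfl
      have hGsup : ∀ s, (⨆ m, G m s) = ENNReal.ofReal (max (vh s) 0 * max (xh s) 1) := by
        intro s
        apply le_antisymm
        · refine iSup_le fun m => ?_
          apply ENNReal.ofReal_le_ofReal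
          exact mul_le_mul_of_nonneg_left (min_le_left _ _) (le_max_right _ _)
        · obtain ⟨m, hm⟩ := exists_nat_ge (max (xh s) 1)
          refine le_trans (le_of_eq ?_) (le_iSup (fun m => G m s) m)
          simp only [hGdef]
          rw [min_eq_left (by push_cast; linarith)]
      calc ∫⁻ s in I, ENNReal.ofReal (vh s * max (xh s) 1)
          = ∫⁻ s in I, ENNReal.ofReal (max (vh s) 0 * max (xh s) 1) := by
            refine lintegral_congr_ae ((ae_restrict_iff' hImeas).2
              (Filter.Eventually.of_forall fun s hsI => ?_))
            show ENNReal.ofReal (vh s * max (xh s) 1)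
                = ENNReal.ofReal (max (vh s) 0 * max (xh s) 1)
            rw [max_eq_left (hnnh s hsI).2.1]
        _ = ∫⁻ s in I, ⨆ m, G m s := by
            refine lintegral_congr fun s => (hGsup s).symm
        _ = ⨆ m, ∫⁻ s in I, G m s := lintegral_iSup hGmeas hGmono
        _ ≤ L' := by
            refine iSup_le fun m => ?_
            refine le_trans (le_of_eq ?_) (keyM m)
            refine lintegral_congr_ae ((ae_restrict_iff' hImeas).2
              (Filter.Eventually.of_forall fun s hsI => ?_))
            simp only [hGdef]
            rw [max_eq_left (hnnh s hsI).2.1]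
    exact le_trans step0 (le_trans hsup hL'L)
  · -- BLOW-UP CASE
    have hsubU : {s | s ∈ I ∧ 0 < ah s ∧ 1 < xh s}
        ⊆ ⋃ n : ℕ, {s | s ∈ I ∧ 0 < ah s ∧ 1 + 1/((n:ℝ)+1) ≤ xh s} := by
      rintro s ⟨h1, h2, h3⟩
      obtain ⟨n, hn⟩ := exists_nat_one_div_lt (sub_pos.2 h3)
      exact Set.mem_iUnion.2 ⟨n, h1, h2, by push_cast at hn ⊢; linarith⟩
    have hex : ∃ n : ℕ, volume {s | s ∈ I ∧ 0 < ah s ∧ 1 + 1/((n:ℝ)+1) ≤ xh s} ≠ 0 := by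
      by_contra h
      push_neg at h
      exact hnull (measure_mono_null hsubU (measure_iUnion_null_iff.2 h))
    obtain ⟨n, hn⟩ := hex
    set δ : ℝ := 1/((n:ℝ)+1) with hδdef
    have hδ : 0 < δ := by positivity
    set S : Set ℝ := {s | s ∈ I ∧ 0 < ah s ∧ 1 + δ ≤ xh s} with hSdef
    have hSmeas : MeasurableSet S := by
      have : S = I ∩ (ah ⁻¹' Set.Ioi 0 ∩ xh ⁻¹' Set.Ici (1+δ)) := by
        ext s
        constructor
        · rintro ⟨h1, h2, h3⟩
          exact ⟨h1, h2, h3⟩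
        · rintro ⟨h1, h2, h3⟩
          exact ⟨h1, h2, h3⟩
      rw [this]
      exact hImeas.inter ((hma measurableSet_Ioi).inter (hmx measurableSet_Ici))
    set C : ℕ → Set ℝ := fun N =>
      S ∩ ⋂ (k : ℕ), ⋂ (_ : N ≤ k), {s | 1 + δ/2 ≤ x k s} with hCdef
    have hCmeas : ∀ N, MeasurableSet (C N) := fun N =>
      hSmeas.inter (MeasurableSet.iInter fun k => MeasurableSet.iInter fun _ =>
        measurableSet_le measurable_const (hmeas k).2.2)
    have hCsubS : ∀ N, C N ⊆ S := fun N => Set.inter_subset_left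
    have hCsubI : ∀ N, C N ⊆ I := fun N s hs => (hCsubS N hs).1
    have hcover : ∀ᵐ s ∂volume, s ∈ S → s ∈ ⋃ N, C N := by
      filter_upwards [hliminf] with s hsl hsS
      have hlt : ((1 + δ/2 : ℝ) : EReal)
          < Filter.liminf (fun k => ((x k s : ℝ) : EReal)) Filter.atTop := by
        refine lt_of_lt_of_le ?_ (hsl hsS.1)
        exact_mod_cast (by linarith [hsS.2.2] : (1 + δ/2 : ℝ) < xh s)
      obtain ⟨N, hN⟩ := Filter.eventually_atTop.1 (Filter.eventually_lt_of_lt_liminf hlt)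
      refine Set.mem_iUnion.2 ⟨N, hsS, ?_⟩
      simp only [Set.mem_iInter, Set.mem_setOf_eq]
      intro k hk
      exact le_of_lt (by exact_mod_cast hN k hk)
    have hCpos : ∃ N, volume (C N) ≠ 0 := by
      by_contra h
      push_neg at h
      have hU : volume (⋃ N, C N) = 0 := measure_iUnion_null h
      have hSnull : volume S = 0 := by
        rw [measure_eq_zero_iff_ae_notMem]
        filter_upwards [hcover, measure_eq_zero_iff_ae_notMem.1 hU] with s h1 h2
        exact fun hsS => h2 (h1 hsS)
      exact hn hSnull
    obtain ⟨N, hCN⟩ := hCpos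
    have hIntOn : IntegrableOn ah (C N) := hL1h.1.mono_set (hCsubI N)
    have hIpos : 0 < ∫ s in C N, ah s := by
      rw [setIntegral_pos_iff_support_of_nonneg_ae
        ((ae_restrict_iff' (hCmeas N)).2 (Filter.Eventually.of_forall
          fun s hsC => (hnnh s (hCsubI N hsC)).1)) hIntOn]
      refine lt_of_lt_of_le ?_ (measure_mono (fun s hsC =>
        ⟨ne_of_gt (hCsubS N hsC).2.1, hsC⟩ : C N ⊆ Function.support ah ∩ C N))
      exact pos_iff_ne_zero.2 hCN
    -- weak convergence with indicator test function
    set φ : ℝ → ℝ := (C N).indicator (fun _ => 1) with hφdef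
    have hφm : Measurable φ := measurable_const.indicator (hCmeas N)
    have hφb : ∃ Cb, ∀ s, |φ s| ≤ Cb := by
      refine ⟨1, fun s => ?_⟩
      by_cases h : s ∈ C N <;> simp [hφdef, h]
    have hrw : ∀ g : ℝ → ℝ, (∫ s in I, g s * φ s) = ∫ s in C N, g s := by
      intro g
      have hfeq : (fun s => g s * φ s) = (C N).indicator g := by
        funext s
        by_cases h : s ∈ C N <;> simp [hφdef, h]
      rw [hfeq, integral_indicator (hCmeas N), Measure.restrict_restrict (hCmeas N),
        Set.inter_eq_left.2 (hCsubI N)]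
    have hw : Tendsto (fun k => ∫ s in C N, a k s) atTop (𝓝 (∫ s in C N, ah s)) := by
      have := (hweak φ hφm hφb).1
      rw [hrw ah] at this
      exact this.congr fun k => hrw (a k)
    set c : ℝ := δ^2/8 with hcdef
    have hb : ∀ k, N ≤ k → ENNReal.ofReal (c / eps k * ∫ s in C N, a k s)
        ≤ ∫⁻ s in I, MepsE (eps k) (a k s) (v k s) (x k s) := by
      intro k hk
      have h1 : ENNReal.ofReal (c / eps k * ∫ s in C N, a k s)
          = ∫⁻ s in C N, ENNReal.ofReal (c / eps k * a k s) := by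
        rw [← integral_const_mul]
        refine MeasureTheory.ofReal_integral_eq_lintegral_ofReal
          (((hL1 k).1.mono_set (hCsubI N)).const_mul _) ?_
        refine (ae_restrict_iff' (hCmeas N)).2 (Filter.Eventually.of_forall fun s hsC => ?_)
        exact mul_nonneg (div_nonneg (by positivity) (heps k).le)
          (hnn k s (hCsubI N hsC)).1
      rw [h1]
      calc ∫⁻ s in C N, ENNReal.ofReal (c / eps k * a k s)
          ≤ ∫⁻ s in C N, MepsE (eps k) (a k s) (v k s) (x k s) := by
            refine lintegral_mono_ae ((ae_restrict_iff' (hCmeas N)).2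
              (Filter.Eventually.of_forall fun s hsC => ?_))
            have hxk : 1 + δ/2 ≤ x k s := by
              have := hsC.2
              simp only [Set.mem_iInter, Set.mem_setOf_eq] at this
              exact this k hk
            have h2 : c / eps k * a k s = δ^2/8/(eps k) * a k s := by rw [hcdef]
            rw [h2]
            exact ptwise2 (heps k) (hnn k s (hCsubI N hsC)).1
              (hnn k s (hCsubI N hsC)).2.1 hδ hxk
        _ ≤ ∫⁻ s in I, MepsE (eps k) (a k s) (v k s) (x k s) :=
            lintegral_mono' (Measure.restrict_mono (hCsubI N) le_rfl) le_rfl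
    have htop : Tendsto (fun k => ENNReal.ofReal (c / eps k * ∫ s in C N, a k s))
        atTop (𝓝 ⊤) := by
      refine ENNReal.tendsto_ofReal_atTop.comp ?_
      have hinv : Tendsto (fun k => (eps k)⁻¹) atTop atTop :=
        Filter.Tendsto.inv_tendsto_nhdsGT_zero
          (tendsto_nhdsWithin_of_tendsto_nhds_of_eventually_within _ heps0
            (Filter.Eventually.of_forall fun k => heps k))
      have hcdiv : Tendsto (fun k => c / eps k) atTop atTop := by
        simp only [div_eq_mul_inv]
        exact Filter.Tendsto.const_mul_atTop (by positivity) hinv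
      exact Filter.Tendsto.atTop_mul_pos hIpos hcdiv hw
    have hLtop : (⊤ : ℝ≥0∞) ≤ L := by
      have h1 := Filter.liminf_le_liminf (Filter.eventually_atTop.2 ⟨N, hb⟩)
        (f := Filter.atTop)
      rw [htop.liminf_eq] at h1
      exact h1
    exact le_trans le_top hLtop
end
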